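/- arXiv:2307.15048 — 4 statements merged into one kernel-verified Lean document; each statement's English description precedes it below -/
import Mathlib

section
/- Every triangle-free graph G of maximum degree Δ ≥ 1 is ((1/6)·log₂ Δ)-IS-rich. -/
open Filter MeasureTheory

namespace RandomCorr

/-- A correspondence assignment for a graph `G`: a list assignment `L` together with,
for each edge, a partial matching between the colors of its endpoints,
encoded as a symmetric relation `M` supported on edges of `G`. -/
structure CorrAssignment {V : Type} (G : SimpleGraph V) where
  L : V → Finset ℕ
  M : V → ℕ → V → ℕ → Prop
  symm : ∀ u i v j, M u i v j → M v j u i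
  adj_of : ∀ u i v j, M u i v j → G.Adj u v
  mem_left : ∀ u i v j, M u i v j → i ∈ L u
  mem_right : ∀ u i v j, M u i v j → j ∈ L v
  matching : ∀ u i v j j', M u i v j → M u i v j' → j = j'

variable {V : Type}

/-- An `(L,M)`-coloring. -/
def CorrAssignment.IsColoring {G : SimpleGraph V} (C : CorrAssignment G) (φ : V → ℕ) : Prop :=
  (∀ v, φ v ∈ C.L v) ∧ ∀ u v, ¬ C.M u (φ u) v (φ v)

/-- `(L,M)` is an `ℓ`-correspondence assignment. -/
def IsLAssignment {G : SimpleGraph V} (C : CorrAssignment G) (ℓ : ℕ) : Prop :=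
  ∀ v, ℓ ≤ (C.L v).card

/-- The correspondence chromatic number of `G` is at most `ℓ`. -/
def corrChromAtMost (G : SimpleGraph V) (ℓ : ℕ) : Prop :=
  ∀ C : CorrAssignment G, IsLAssignment C ℓ → ∃ φ, C.IsColoring φ

/-- Maximum degree of a finite graph. -/
noncomputable def maxDeg [Fintype V] (G : SimpleGraph V) : ℕ :=
  Finset.univ.sup fun v => (G.neighborSet v).ncard

/-- `binom(n, ≤ b) = ∑_{i=0}^{⌊b⌋} binom(n,i)`. -/
noncomputable def binomLe (n : ℕ) (b : ℝ) : ℕ :=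
  ∑ i ∈ Finset.range (⌊b⌋₊ + 1), n.choose i

/-- The number of independent sets (including the empty set) of a subgraph `F`. -/
noncomputable def subIndepCount {W : Type} {H : SimpleGraph W} (F : H.Subgraph) : ℕ :=
  {S : Set W | S ⊆ F.verts ∧ ∀ a ∈ S, ∀ b ∈ S, ¬ F.Adj a b}.ncard

/-- A neighborhood subgraph: a subgraph whose vertex set is contained in the
neighborhood of some vertex. -/
def IsNbrSubgraph {W : Type} {H : SimpleGraph W} (F : H.Subgraph) : Prop :=
  ∃ v, F.verts ⊆ H.neighborSet v

/-- `G` is `b`-IS-rich (with respect to maximum degree `Δ`): every `b`-large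
neighborhood subgraph `F` satisfies `I(F) ≥ 2 · binom(|V(F)|, ≤ b)`. -/
def ISRich (G : SimpleGraph V) (b : ℝ) (Δ : ℕ) : Prop :=
  ∀ F : G.Subgraph, IsNbrSubgraph F →
    (Δ : ℝ) ^ ((1 : ℝ)/3) < (binomLe F.verts.ncard b : ℝ) →
    2 * binomLe F.verts.ncard b ≤ subIndepCount F

/-- The cover graph of a correspondence assignment. -/
def coverGraph {G : SimpleGraph V} (C : CorrAssignment G) : SimpleGraph (V × ℕ) where
  Adj x y := C.M x.1 x.2 y.1 y.2
  symm := ⟨fun x y h => C.symm _ _ _ _ h⟩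
  loopless := ⟨fun x h => (G.loopless.irrefl x.1) (C.adj_of _ _ _ _ h)⟩

/-- A correspondence assignment is `b`-IS-rich (with respect to `Δ`) if every `b`-large
neighborhood subgraph of its cover graph has at least `2 · binom(|V(F)|, ≤ b)`
independent sets. -/
def CorrAssignment.ISRich {G : SimpleGraph V} (C : CorrAssignment G) (b : ℝ) (Δ : ℕ) : Prop :=
  ∀ F : (coverGraph C).Subgraph, IsNbrSubgraph F →
    (Δ : ℝ) ^ ((1 : ℝ)/3) < (binomLe F.verts.ncard b : ℝ) →
    2 * binomLe F.verts.ncard b ≤ subIndepCount F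

/-- Bernoulli measure on `Bool` with success probability `p` (truncated to `[0,1]`). -/
noncomputable def bern (p : ℝ) : Measure Bool :=
  (PMF.bernoulli (min (Real.toNNReal p) 1) (min_le_right _ _)).toMeasure

/-- The Erdős–Rényi measure: each potential edge appears independently with
probability `p`. -/
noncomputable def erdosRenyi (n : ℕ) (p : ℝ) : Measure (Sym2 (Fin n) → Bool) :=
  Measure.pi fun _ => bern p

/-- The graph determined by an edge-indicator function. -/
def graphOf {n : ℕ} (ω : Sym2 (Fin n) → Bool) : SimpleGraph (Fin n) where
  Adj u v := u ≠ v ∧ ω s(u, v) = true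
  symm := by
    constructor
    intro u v h
    refine ⟨h.1.symm, ?_⟩
    rw [Sym2.eq_swap]
    exact h.2
  loopless := ⟨fun u h => h.1 rfl⟩

/-- `G` has a complete minor of order `k`. -/
def HasCompleteMinor (G : SimpleGraph V) (k : ℕ) : Prop :=
  ∃ B : Fin k → Set V,
    (∀ i, (B i).Nonempty) ∧
    (∀ i, (G.induce (B i)).Connected) ∧
    (∀ i j, i ≠ j → Disjoint (B i) (B j)) ∧
    (∀ i j, i ≠ j → ∃ u ∈ B i, ∃ v ∈ B j, G.Adj u v)

/-- The Hadwiger number: the largest `k` such that `K_k` is a minor of `G`. -/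
noncomputable def hadwigerNumber [Fintype V] (G : SimpleGraph V) : ℕ :=
  sSup {k | HasCompleteMinor G k}

/-- Independence number. -/
noncomputable def indepNum [Fintype V] (G : SimpleGraph V) : ℕ :=
  sSup {k | ∃ S : Finset V, S.card = k ∧ ∀ a ∈ S, ∀ b ∈ S, ¬ G.Adj a b}

/-- A partial `(L,M)`-coloring. -/
def IsPartialColoring {G : SimpleGraph V} (C : CorrAssignment G) (φ : V → Option ℕ) : Prop :=
  (∀ v c, φ v = some c → c ∈ C.L v) ∧
  ∀ u v cu cv, φ u = some cu → φ v = some cv → ¬ C.M u cu v cv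

/-- The number of colors available at `u` with respect to a partial coloring `φ`. -/
noncomputable def availCount {G : SimpleGraph V} (C : CorrAssignment G)
    (φ : V → Option ℕ) (u : V) : ℕ :=
  {c : ℕ | c ∈ C.L u ∧ ∀ v cv, φ v = some cv → ¬ C.M u c v cv}.ncard

/-- The event `A_u`: `u` is uncolored and fewer than `Δ^{7/12}` colors are available
at `u`. -/
def EventA {G : SimpleGraph V} (C : CorrAssignment G) (Δ : ℕ) (u : V)
    (φ : V → Option ℕ) : Prop :=
  φ u = none ∧ (availCount C φ u : ℝ) < (Δ : ℝ) ^ ((7 : ℝ)/12)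

/-- The number of independent sets of `F` of size at least `m`. -/
noncomputable def indepGeCount {W : Type} {H : SimpleGraph W} (F : H.Subgraph) (m : ℕ) : ℕ :=
  {S : Set W | S ⊆ F.verts ∧ (∀ a ∈ S, ∀ b ∈ S, ¬ F.Adj a b) ∧ m ≤ S.ncard}.ncard

/-- The median size `ᾱ(F)` of an independent set: the largest `m` such that at least
half of the independent sets of `F` have size at least `m`. -/
noncomputable def medianIndep {W : Type} {H : SimpleGraph W} (F : H.Subgraph) : ℕ :=
  sSup {m : ℕ | subIndepCount F ≤ 2 * indepGeCount F m}

end RandomCorr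

/-- Truncated binomial sums are at most `2 ^ n`. -/
lemma aux_sum_choose_le (k n : ℕ) :
    ∑ i ∈ Finset.range (k + 1), n.choose i ≤ 2 ^ n := by
  rcases le_or_gt k n with h | h
  · calc ∑ i ∈ Finset.range (k + 1), n.choose i
        ≤ ∑ i ∈ Finset.range (n + 1), n.choose i :=
          Finset.sum_le_sum_of_subset (by
            intro x hx
            simp only [Finset.mem_range] at *
            omega)
      _ = 2 ^ n := Nat.sum_range_choose n
  · have := Finset.sum_subset (s₁ := Finset.range (n + 1)) (s₂ := Finset.range (k + 1))
      (f := fun i => n.choose i)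
      (by intro x hx; simp only [Finset.mem_range] at *; omega)
      (by
        intro x hx hnx
        simp only [Finset.mem_range] at *
        exact Nat.choose_eq_zero_of_lt (by omega))
    rw [← this, Nat.sum_range_choose]

/-- If `2k < n` then twice the truncated binomial sum is at most `2 ^ n`. -/
lemma aux_two_mul_sum_choose_le {k n : ℕ} (h : 2 * k < n) :
    2 * ∑ i ∈ Finset.range (k + 1), n.choose i ≤ 2 ^ n := by
  set A : Finset ℕ := Finset.range (k + 1) with hA
  set B : Finset ℕ := A.image (fun j => n - j) with hB
  have hmemA : ∀ x ∈ A, x ≤ k := by intro x hx; simp [hA] at hx; omega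
  have hsumB : ∑ i ∈ B, n.choose i = ∑ j ∈ A, n.choose j := by
    rw [hB, Finset.sum_image (by
      intro x hx y hy hxy
      have := hmemA x hx; have := hmemA y hy
      simp only at hxy
      omega)]
    refine Finset.sum_congr rfl ?_
    intro j hj
    exact Nat.choose_symm (by have := hmemA j hj; omega)
  have hdisj : Disjoint A B := by
    rw [Finset.disjoint_left]
    intro x hxA hxB
    have h1 := hmemA x hxA
    rw [hB, Finset.mem_image] at hxB
    obtain ⟨j, hj, hjx⟩ := hxB
    have := hmemA j hj
    omega
  have hsub : A ∪ B ⊆ Finset.range (n + 1) := by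
    intro x hx
    rw [Finset.mem_union] at hx
    rw [Finset.mem_range]
    rcases hx with hx | hx
    · have := hmemA x hx; omega
    · rw [hB, Finset.mem_image] at hx
      obtain ⟨j, hj, hjx⟩ := hx
      omega
  calc 2 * ∑ i ∈ A, n.choose i
      = ∑ i ∈ A, n.choose i + ∑ i ∈ B, n.choose i := by rw [hsumB]; ring
    _ = ∑ i ∈ A ∪ B, n.choose i := (Finset.sum_union hdisj).symm
    _ ≤ ∑ i ∈ Finset.range (n + 1), n.choose i := Finset.sum_le_sum_of_subset hsub
    _ = 2 ^ n := Nat.sum_range_choose n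

/-- The number of subsets of a finite set of size `n` is `2 ^ n`. -/
lemma aux_ncard_subsets {V : Type} [Fintype V] (t : Set V) :
    {S : Set V | S ⊆ t}.ncard = 2 ^ t.ncard := by
  classical
  have heq : {S : Set V | S ⊆ t} =
      (fun s : Finset V => (↑s : Set V)) '' ↑t.toFinset.powerset := by
    ext S
    simp only [Set.mem_setOf_eq, Set.mem_image, Finset.mem_coe, Finset.mem_powerset]
    constructor
    · intro hS
      refine ⟨(Set.toFinite S).toFinset, ?_, (Set.toFinite S).coe_toFinset⟩
      intro x hx
      rw [Set.Finite.mem_toFinset] at hx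
      rw [Set.mem_toFinset]
      exact hS hx
    · rintro ⟨s, hs, rfl⟩
      intro x hx
      have := hs hx
      rwa [Set.mem_toFinset] at this
  rw [heq, Set.ncard_image_of_injective _ Finset.coe_injective,
    Set.ncard_coe_finset, Finset.card_powerset, Set.ncard_eq_toFinset_card' t]

/-- Every triangle-free graph of maximum degree `Δ ≥ 1` is
`((1/6)·log₂ Δ)`-IS-rich. -/
theorem triangleFree_isRich
    (V : Type) [Fintype V] (G : SimpleGraph V) (Δ : ℕ)
    (hΔ : RandomCorr.maxDeg G = Δ) (hΔ1 : 1 ≤ Δ) (htf : G.CliqueFree 3) :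
    RandomCorr.ISRich G ((1/6) * Real.logb 2 Δ) Δ := by
  classical
  intro F hnbr hlarge
  obtain ⟨v, hv⟩ := hnbr
  -- F is edgeless since G is triangle-free
  have hedgeless : ∀ a b, ¬ F.Adj a b := by
    intro a b hab
    have hGab : G.Adj a b := hab.adj_sub
    have hva : G.Adj v a := hv hab.fst_mem
    have hvb : G.Adj v b := hv hab.snd_mem
    exact htf {v, a, b} (SimpleGraph.is3Clique_triple_iff.mpr ⟨hva, hvb, hGab⟩)
  set n := F.verts.ncard with hn
  set b := (1/6) * Real.logb 2 Δ with hb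
  set k := ⌊b⌋₊ with hk
  -- the independent-set count is 2^n
  have hcount : RandomCorr.subIndepCount F = 2 ^ n := by
    have : {S : Set V | S ⊆ F.verts ∧ ∀ a ∈ S, ∀ b ∈ S, ¬ F.Adj a b}
        = {S : Set V | S ⊆ F.verts} := by
      ext S
      simp only [Set.mem_setOf_eq, and_iff_left_iff_imp]
      intro _ a _ c _
      exact hedgeless a c
    rw [RandomCorr.subIndepCount, this, aux_ncard_subsets]
  -- from the largeness hypothesis, deduce (1/3) log₂ Δ < n
  have hΔpos : (0:ℝ) < (Δ:ℝ) := by exact_mod_cast hΔ1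
  have h2n : (Δ:ℝ) ^ ((1:ℝ)/3) < (2:ℝ) ^ n := by
    calc (Δ:ℝ) ^ ((1:ℝ)/3) < (RandomCorr.binomLe n b : ℝ) := hlarge
      _ ≤ ((2:ℕ) ^ n : ℕ) := by exact_mod_cast aux_sum_choose_le k n
      _ = (2:ℝ) ^ n := by push_cast; ring
  have hlog : (1/3) * Real.logb 2 (Δ:ℝ) < (n:ℝ) := by
    have hrp : (0:ℝ) < (Δ:ℝ) ^ ((1:ℝ)/3) := Real.rpow_pos_of_pos hΔpos _
    have := Real.logb_lt_logb (by norm_num : (1:ℝ) < 2) hrp h2n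
    have h1 : Real.logb 2 ((Δ:ℝ) ^ ((1:ℝ)/3)) = (1/3) * Real.logb 2 (Δ:ℝ) := by
      rw [Real.logb, Real.logb, Real.log_rpow hΔpos]
      ring
    have h2 : Real.logb 2 ((2:ℝ) ^ n) = (n:ℝ) := by
      rw [Real.logb_pow]
      simp [Real.logb_self_eq_one]
    rw [h1, h2] at this
    exact this
  have hbnonneg : 0 ≤ b := by
    rw [hb]
    have : 0 ≤ Real.logb 2 (Δ:ℝ) :=
      Real.logb_nonneg (by norm_num) (by exact_mod_cast hΔ1)
    positivity
  have h2k : 2 * k < n := by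
    have hkb : (k:ℝ) ≤ b := Nat.floor_le hbnonneg
    have : (2 * k : ℝ) < (n:ℝ) := by
      calc (2 * k : ℝ) ≤ 2 * b := by linarith
        _ = (1/3) * Real.logb 2 (Δ:ℝ) := by rw [hb]; ring
        _ < (n:ℝ) := hlog
    exact_mod_cast this
  rw [hcount]
  exact aux_two_mul_sum_choose_le h2k
end

section
/- For every fixed integer r ≥ 2 there exist a function b : ℕ → ℕ with b(Δ) = Θ(log Δ / log r) and an integer Δ₀ such that every (r+1)-colorable graph G of maximum degree Δ ≥ Δ₀ is b(Δ)-IS-rich. -/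
open Filter MeasureTheory

namespace RandomCorr

lemma choose_mono_left (n : ℕ) : ∀ {i j : ℕ}, i ≤ j → 2 * j ≤ n → n.choose i ≤ n.choose j := by
  intro i j hij
  induction j, hij using Nat.le_induction with
  | base => exact fun _ => le_rfl
  | succ j hij ih =>
    intro h
    exact (ih (by omega)).trans (Nat.choose_le_succ_of_lt_half_left (by omega))

lemma binomLe_natCast (n b : ℕ) :
    binomLe n (b : ℝ) = ∑ i ∈ Finset.range (b + 1), n.choose i := by
  simp [binomLe]

lemma binomLe_le_two_pow (n b : ℕ) : binomLe n (b : ℝ) ≤ 2 ^ n := by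
  rw [binomLe_natCast]
  rcases le_or_gt b n with h | h
  · calc ∑ i ∈ Finset.range (b + 1), n.choose i
        ≤ ∑ i ∈ Finset.range (n + 1), n.choose i :=
          Finset.sum_le_sum_of_subset (Finset.range_subset_range.mpr (by omega))
      _ = 2 ^ n := Nat.sum_range_choose n
  · rw [← Finset.sum_subset
      (show Finset.range (n + 1) ⊆ Finset.range (b + 1) from Finset.range_subset_range.mpr (by omega))
      (fun x hx hnx => Nat.choose_eq_zero_of_lt (by
        simp only [Finset.mem_range] at hx hnx; omega))]
    exact (Nat.sum_range_choose n).le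

set_option maxHeartbeats 1000000 in
lemma key_ineq (r N B a : ℕ) (hr : 2 ≤ r) (hNr : 2 * r ≤ N) (ha : N ≤ r * a)
    (hB : (B : ℝ) ≤ (N : ℝ) / (100 * (r : ℝ) ^ 2)) :
    2 * binomLe N (B : ℝ) ≤ 2 ^ a := by
  have hrR : (2 : ℝ) ≤ r := by exact_mod_cast hr
  have hrpos : (0 : ℝ) < r := by linarith
  have hNR : (2 : ℝ) * r ≤ N := by exact_mod_cast hNr
  have hNpos : (0 : ℝ) < N := by nlinarith
  have hl2 : (0.6931471803 : ℝ) < Real.log 2 := Real.log_two_gt_d9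
  have ha1 : 1 ≤ a := by
    rcases Nat.eq_zero_or_pos a with rfl | h
    · omega
    · exact h
  have ha' : (N : ℝ) / r ≤ a := by
    rw [div_le_iff₀ hrpos]
    calc (N : ℝ) ≤ (r : ℝ) * a := by exact_mod_cast ha
      _ = a * r := mul_comm _ _
  rcases Nat.eq_zero_or_pos B with rfl | hB1
  · have h0 : binomLe N ((0 : ℕ) : ℝ) = 1 := by simp [binomLe]
    rw [h0]
    calc 2 * 1 = 2 ^ 1 := rfl
      _ ≤ 2 ^ a := Nat.pow_le_pow_right (by norm_num) ha1
  have hBpos : (0 : ℝ) < B := by exact_mod_cast hB1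
  have hb' : (B : ℝ) * (100 * (r : ℝ) ^ 2) ≤ N := (le_div_iff₀ (by positivity)).mp hB
  have hBN : 2 * B ≤ N := by
    have h4 : (4 : ℝ) ≤ (r : ℝ) ^ 2 := by nlinarith
    have : (2 : ℝ) * B ≤ N := by nlinarith
    exact_mod_cast this
  have h1 : binomLe N (B : ℝ) ≤ (B + 1) * N.choose B := by
    rw [binomLe_natCast]
    have := Finset.sum_le_card_nsmul (Finset.range (B + 1)) (fun i => N.choose i) (N.choose B)
      (fun i hi => choose_mono_left N (Nat.lt_succ_iff.mp (Finset.mem_range.mp hi)) hBN)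
    simpa [Finset.card_range, smul_eq_mul] using this
  set e1 : ℝ := Real.exp 1 with he1
  have he1pos : (0 : ℝ) < e1 := Real.exp_pos 1
  have hfact : (B : ℝ) ^ B ≤ (B.factorial : ℝ) * e1 ^ B := by
    have hsum := Real.sum_le_exp_of_nonneg (Nat.cast_nonneg B : (0 : ℝ) ≤ B) (B + 1)
    have hsingle : (B : ℝ) ^ B / B.factorial ≤ ∑ i ∈ Finset.range (B + 1), (B : ℝ) ^ i / i.factorial :=
      Finset.single_le_sum (f := fun i => (B : ℝ) ^ i / i.factorial)
        (fun i _ => by positivity) (Finset.self_mem_range_succ B)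
    have h3 : (B : ℝ) ^ B / B.factorial ≤ Real.exp B := hsingle.trans hsum
    have hexp : Real.exp (B : ℝ) = e1 ^ B := by
      rw [he1, ← Real.exp_nat_mul, mul_one]
    rw [div_le_iff₀ (by positivity : (0 : ℝ) < (B.factorial : ℝ))] at h3
    calc (B : ℝ) ^ B ≤ Real.exp B * B.factorial := h3
      _ = (B.factorial : ℝ) * e1 ^ B := by rw [hexp]; ring
  have h2 : (N.choose B : ℝ) ≤ (e1 * N / B) ^ B := by
    refine (Nat.choose_le_pow_div B N).trans ?_
    rw [div_pow, mul_pow, div_le_div_iff₀ (by positivity) (by positivity : (0 : ℝ) < (B : ℝ) ^ B)]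
    calc (N : ℝ) ^ B * (B : ℝ) ^ B ≤ (N : ℝ) ^ B * ((B.factorial : ℝ) * e1 ^ B) :=
          mul_le_mul_of_nonneg_left hfact (by positivity)
      _ = e1 ^ B * (N : ℝ) ^ B * B.factorial := by ring
  set X : ℝ := 2 * (((B : ℝ) + 1) * (e1 * N / B) ^ B) with hX
  have hXpos : 0 < X := by
    have : (0 : ℝ) < e1 * N / B := by positivity
    positivity
  have hchain : 2 * (binomLe N (B : ℝ) : ℝ) ≤ X := by
    have h1' : (binomLe N (B : ℝ) : ℝ) ≤ ((B : ℝ) + 1) * (N.choose B : ℝ) := by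
      exact_mod_cast h1
    have h2' : ((B : ℝ) + 1) * (N.choose B : ℝ) ≤ ((B : ℝ) + 1) * (e1 * N / B) ^ B :=
      mul_le_mul_of_nonneg_left h2 (by positivity)
    rw [hX]; linarith
  -- logarithmic estimate
  have hlog1 : Real.log X = Real.log 2 + Real.log ((B : ℝ) + 1) + B * Real.log (e1 * N / B) := by
    rw [hX, Real.log_mul two_ne_zero (by positivity), Real.log_mul (by positivity)
      (by positivity), Real.log_pow]
    ring
  have hlogB1 : Real.log ((B : ℝ) + 1) ≤ B := by
    have := Real.log_le_sub_one_of_pos (show (0 : ℝ) < (B : ℝ) + 1 by positivity)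
    linarith
  have hq : (0 : ℝ) < (N : ℝ) / B := by positivity
  have hlogterm : Real.log (e1 * N / B) ≤ 1 + 2 * Real.sqrt ((N : ℝ) / B) := by
    rw [show e1 * (N : ℝ) / B = e1 * ((N : ℝ) / B) by ring,
      Real.log_mul (by positivity) (by positivity), he1, Real.log_exp]
    have hls : Real.log ((N : ℝ) / B) = 2 * Real.log (Real.sqrt ((N : ℝ) / B)) := by
      rw [Real.log_sqrt hq.le]; ring
    have h4 := Real.log_le_sub_one_of_pos (Real.sqrt_pos.mpr hq)
    linarith
  have hsqrt : (B : ℝ) * Real.sqrt ((N : ℝ) / B) = Real.sqrt B * Real.sqrt N := by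
    have hBne : (B : ℝ) ≠ 0 := ne_of_gt hBpos
    calc (B : ℝ) * Real.sqrt ((N : ℝ) / B)
        = Real.sqrt ((B : ℝ) ^ 2) * Real.sqrt ((N : ℝ) / B) := by
          rw [Real.sqrt_sq (Nat.cast_nonneg B)]
      _ = Real.sqrt ((B : ℝ) ^ 2 * ((N : ℝ) / B)) := (Real.sqrt_mul (by positivity) _).symm
      _ = Real.sqrt ((B : ℝ) * N) := by congr 1; field_simp
      _ = Real.sqrt B * Real.sqrt N := Real.sqrt_mul (Nat.cast_nonneg B) _
  have hsB10 : Real.sqrt B ≤ Real.sqrt N / (10 * r) := by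
    have h10 : Real.sqrt ((N : ℝ) / (100 * (r : ℝ) ^ 2)) = Real.sqrt N / (10 * r) := by
      rw [Real.sqrt_div (Nat.cast_nonneg N)]
      congr 1
      rw [show (100 * (r : ℝ) ^ 2) = (10 * r) ^ 2 by ring, Real.sqrt_sq (by positivity)]
    calc Real.sqrt (B : ℝ) ≤ Real.sqrt ((N : ℝ) / (100 * (r : ℝ) ^ 2)) := Real.sqrt_le_sqrt hB
      _ = _ := h10
  have hBsqrtN : (B : ℝ) * Real.sqrt ((N : ℝ) / B) ≤ (N : ℝ) / (10 * r) := by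
    rw [hsqrt]
    calc Real.sqrt (B : ℝ) * Real.sqrt N ≤ Real.sqrt N / (10 * r) * Real.sqrt N :=
          mul_le_mul_of_nonneg_right hsB10 (Real.sqrt_nonneg _)
      _ = (N : ℝ) / (10 * r) := by
          rw [div_mul_eq_mul_div, Real.mul_self_sqrt (Nat.cast_nonneg N)]
  have hcomb : Real.log X ≤ Real.log 2 + 2 * (B : ℝ) + (N : ℝ) / (5 * r) := by
    rw [hlog1]
    have hBt : (B : ℝ) * Real.log (e1 * N / B) ≤ (B : ℝ) * (1 + 2 * Real.sqrt ((N : ℝ) / B)) :=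
      mul_le_mul_of_nonneg_left hlogterm (by positivity)
    have hexp5 : (B : ℝ) * (1 + 2 * Real.sqrt ((N : ℝ) / B))
        = (B : ℝ) + 2 * ((B : ℝ) * Real.sqrt ((N : ℝ) / B)) := by ring
    have he5 : 2 * ((N : ℝ) / (10 * r)) = (N : ℝ) / (5 * r) := by ring
    nlinarith [hBsqrtN]
  have hgoal : Real.log 2 + 2 * (B : ℝ) + (N : ℝ) / (5 * r) ≤ (a : ℝ) * Real.log 2 := by
    have h6 : (N : ℝ) / r * Real.log 2 ≤ (a : ℝ) * Real.log 2 :=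
      mul_le_mul_of_nonneg_right ha' (by linarith)
    refine le_trans ?_ h6
    rw [div_mul_eq_mul_div, le_div_iff₀ hrpos]
    have haux1 : (0 : ℝ) ≤ (B : ℝ) * r * ((r : ℝ) - 2) :=
      mul_nonneg (mul_nonneg (Nat.cast_nonneg B) (Nat.cast_nonneg r)) (by linarith)
    have hBr : 2 * (B : ℝ) * r ≤ (N : ℝ) / 100 := by nlinarith [hb', haux1]
    have hlr : Real.log 2 * r ≤ Real.log 2 * ((N : ℝ) / 2) := by
      have hrn : (r : ℝ) ≤ (N : ℝ) / 2 := by linarith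
      exact mul_le_mul_of_nonneg_left hrn (by linarith)
    have hexpand : (Real.log 2 + 2 * (B : ℝ) + (N : ℝ) / (5 * r)) * r
        = Real.log 2 * r + 2 * (B : ℝ) * r + (N : ℝ) / 5 := by
      field_simp
    have hlast : (0 : ℝ) ≤ (N : ℝ) * (Real.log 2 / 2 - 21 / 100) :=
      mul_nonneg hNpos.le (by linarith)
    rw [hexpand]
    nlinarith
  have hfinal : X ≤ 2 ^ a := by
    have h2a : (0 : ℝ) < 2 ^ a := by positivity
    have hlogX : Real.log X ≤ Real.log ((2 : ℝ) ^ a) := by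
      rw [Real.log_pow]
      exact hcomb.trans hgoal
    exact (Real.log_le_log_iff hXpos h2a).mp hlogX
  have : 2 * (binomLe N (B : ℝ) : ℝ) ≤ (2 : ℝ) ^ a := hchain.trans hfinal
  exact_mod_cast this

end RandomCorr

open RandomCorr

set_option maxHeartbeats 1000000 in
/-- For every fixed `r ≥ 2` there are `b : ℕ → ℕ` with
`b(Δ) = Θ(log Δ / log r)` and `Δ₀` such that every `(r+1)`-colorable graph of maximum
degree `Δ ≥ Δ₀` is `b(Δ)`-IS-rich. -/
theorem colorable_graph_isRich (r : ℕ) (hr : 2 ≤ r) :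
    ∃ b : ℕ → ℕ,
      (∃ c₁ c₂ : ℝ, 0 < c₁ ∧ 0 < c₂ ∧ ∀ᶠ Δ : ℕ in Filter.atTop,
        c₁ * (Real.log Δ / Real.log r) ≤ (b Δ : ℝ) ∧
        (b Δ : ℝ) ≤ c₂ * (Real.log Δ / Real.log r)) ∧
      ∃ Δ₀ : ℕ, ∀ (V : Type) [Fintype V] (G : SimpleGraph V) (Δ : ℕ),
        RandomCorr.maxDeg G = Δ → Δ₀ ≤ Δ → G.Colorable (r + 1) →
        RandomCorr.ISRich G (b Δ : ℝ) Δ := by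
  have hrR : (2 : ℝ) ≤ r := by exact_mod_cast hr
  have hrpos : (0 : ℝ) < r := by linarith
  have hl2 : (0.6931471803 : ℝ) < Real.log 2 := Real.log_two_gt_d9
  set K : ℝ := 300 * (r : ℝ) ^ 2 * Real.log 2 with hK
  have hKpos : 0 < K := by rw [hK]; nlinarith
  have hlogr_pos : 0 < Real.log r := Real.log_pos (by linarith)
  have hlogrK : Real.log r ≤ K := by
    have h1 : Real.log r ≤ (r : ℝ) - 1 := Real.log_le_sub_one_of_pos hrpos
    rw [hK]; nlinarith
  refine ⟨fun Δ => ⌊Real.log Δ / K⌋₊, ⟨Real.log r / (2 * K), 1, by positivity, one_pos, ?_⟩, ?_⟩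
  · rw [Filter.eventually_atTop]
    refine ⟨⌈Real.exp (2 * K)⌉₊, fun Δ hΔ => ?_⟩
    have hΔR : Real.exp (2 * K) ≤ (Δ : ℝ) := by
      refine (Nat.le_ceil _).trans ?_
      exact_mod_cast hΔ
    have hΔpos : (0 : ℝ) < Δ := lt_of_lt_of_le (Real.exp_pos _) hΔR
    have hlogΔ : 2 * K ≤ Real.log Δ := by
      calc 2 * K = Real.log (Real.exp (2 * K)) := (Real.log_exp _).symm
        _ ≤ Real.log Δ := Real.log_le_log (Real.exp_pos _) hΔR
    have hlogΔpos : 0 < Real.log Δ := lt_of_lt_of_le (by nlinarith) hlogΔ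
    constructor
    · have hfl : Real.log Δ / K - 1 < (⌊Real.log Δ / K⌋₊ : ℝ) := Nat.sub_one_lt_floor _
      have hx2 : 2 ≤ Real.log Δ / K := by rw [le_div_iff₀ hKpos]; linarith
      have hhalf : Real.log Δ / (2 * K) ≤ (⌊Real.log Δ / K⌋₊ : ℝ) := by
        have he : Real.log Δ / (2 * K) = (Real.log Δ / K) / 2 := by
          rw [div_div]; ring_nf
        rw [he]; linarith
      calc Real.log r / (2 * K) * (Real.log Δ / Real.log r) = Real.log Δ / (2 * K) := by
            field_simp
        _ ≤ _ := hhalf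
    · have hfl : (⌊Real.log Δ / K⌋₊ : ℝ) ≤ Real.log Δ / K := Nat.floor_le (by positivity)
      have hmono : Real.log Δ / K ≤ Real.log Δ / Real.log r :=
        div_le_div_of_nonneg_left hlogΔpos.le hlogr_pos hlogrK
      rw [one_mul]
      exact hfl.trans hmono
  · refine ⟨2 ^ (6 * r + 2), ?_⟩
    intro V _ G Δ hmax hΔ0 hcol F hnbr hlarge
    classical
    obtain ⟨v, hv⟩ := hnbr
    obtain ⟨C⟩ := hcol
    set n := F.verts.ncard with hn
    set B := ⌊Real.log Δ / K⌋₊ with hBdef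
    have hΔ1 : (2 : ℝ) ^ (6 * r + 2) ≤ (Δ : ℝ) := by
      have := hΔ0
      calc (2 : ℝ) ^ (6 * r + 2) = ((2 ^ (6 * r + 2) : ℕ) : ℝ) := by push_cast; ring
        _ ≤ (Δ : ℝ) := by exact_mod_cast hΔ0
    have hΔpos : (0 : ℝ) < Δ := lt_of_lt_of_le (by positivity) hΔ1
    have hlogΔ : ((6 * r + 2 : ℕ) : ℝ) * Real.log 2 ≤ Real.log Δ := by
      calc ((6 * r + 2 : ℕ) : ℝ) * Real.log 2 = Real.log ((2 : ℝ) ^ (6 * r + 2)) :=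
            (Real.log_pow _ _).symm
        _ ≤ Real.log Δ := Real.log_le_log (by positivity) hΔ1
    have hlogΔpos : 0 < Real.log Δ := by
      refine lt_of_lt_of_le ?_ hlogΔ
      have : (1 : ℝ) ≤ ((6 * r + 2 : ℕ) : ℝ) := by
        have : (1 : ℕ) ≤ 6 * r + 2 := by omega
        exact_mod_cast this
      nlinarith
    have h2n : (binomLe n (B : ℝ) : ℝ) ≤ (2 : ℝ) ^ n := by
      calc (binomLe n (B : ℝ) : ℝ) ≤ ((2 ^ n : ℕ) : ℝ) := by
            exact_mod_cast binomLe_le_two_pow n B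
        _ = (2 : ℝ) ^ n := by push_cast; ring
    have hlarge' : (Δ : ℝ) ^ ((1 : ℝ) / 3) < (2 : ℝ) ^ n := lt_of_lt_of_le hlarge h2n
    have hnlog : (1 / 3 : ℝ) * Real.log Δ < (n : ℝ) * Real.log 2 := by
      have := Real.log_lt_log (Real.rpow_pos_of_pos hΔpos _) hlarge'
      rwa [Real.log_rpow hΔpos, Real.log_pow] at this
    have hnr : (2 * r : ℝ) < (n : ℝ) := by
      have hc : ((6 * r + 2 : ℕ) : ℝ) = 6 * (r : ℝ) + 2 := by push_cast; ring
      rw [hc] at hlogΔ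
      nlinarith
    have hn2r : 2 * r ≤ n := by
      have : ((2 * r : ℕ) : ℝ) < (n : ℝ) := by push_cast; exact hnr
      have := Nat.cast_lt.mp this
      omega
    have hnpos : 0 < n := by omega
    have hBle : (B : ℝ) ≤ (n : ℝ) / (100 * (r : ℝ) ^ 2) := by
      have h1 : (B : ℝ) ≤ Real.log Δ / K := Nat.floor_le (by positivity)
      have h2 : Real.log Δ < 3 * Real.log 2 * n := by nlinarith
      have h3 : Real.log Δ / K ≤ (3 * Real.log 2 * n) / K := by
        exact div_le_div_of_nonneg_right h2.le hKpos.le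
      have h4 : (3 * Real.log 2 * (n : ℝ)) / K = (n : ℝ) / (100 * (r : ℝ) ^ 2) := by
        rw [hK]; field_simp; ring
      calc (B : ℝ) ≤ Real.log Δ / K := h1
        _ ≤ (3 * Real.log 2 * n) / K := h3
        _ = (n : ℝ) / (100 * (r : ℝ) ^ 2) := h4
    -- pigeonhole to find a large color class
    have hsfin : F.verts.Finite := Set.toFinite _
    set s : Finset V := hsfin.toFinset with hs
    have hscard : s.card = n := by
      rw [hs, hn, Set.ncard_eq_toFinset_card _ hsfin]
    set t : Finset (Fin (r + 1)) := Finset.univ.erase (C v) with ht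
    have htcard : t.card = r := by
      rw [ht, Finset.card_erase_of_mem (Finset.mem_univ _)]
      simp
    have hmaps : ∀ u ∈ s, C u ∈ t := by
      intro u hu
      rw [ht, Finset.mem_erase]
      refine ⟨?_, Finset.mem_univ _⟩
      have hadj : G.Adj v u := hv (hsfin.mem_toFinset.mp hu)
      exact (C.valid hadj).symm
    have hsum : s.card = ∑ c ∈ t, (s.filter fun u => C u = c).card :=
      Finset.card_eq_sum_card_fiberwise hmaps
    set M := t.sup (fun c => (s.filter fun u => C u = c).card) with hM
    have hle : s.card ≤ r * M := by
      calc s.card = ∑ c ∈ t, (s.filter fun u => C u = c).card := hsum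
        _ ≤ t.card • M := Finset.sum_le_card_nsmul t _ M (fun c hc => Finset.le_sup (f := fun c => (s.filter fun u => C u = c).card) hc)
        _ = r * M := by rw [htcard, smul_eq_mul]
    have htne : t.Nonempty := Finset.card_pos.mp (by omega)
    obtain ⟨c₀, hc₀, hMc⟩ := Finset.exists_mem_eq_sup t htne
      (fun c => (s.filter fun u => C u = c).card)
    set A : Finset V := s.filter (fun u => C u = c₀) with hA
    have hna : n ≤ r * A.card := by
      rw [← hscard]
      rw [hM, hMc] at hle
      exact hle
    have hAsub : (A : Set V) ⊆ F.verts := by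
      intro x hx
      have hx' : x ∈ A := hx
      have : x ∈ s := Finset.mem_of_mem_filter x hx'
      exact hsfin.mem_toFinset.mp this
    have hAind : ∀ a ∈ (A : Set V), ∀ b ∈ (A : Set V), ¬ F.Adj a b := by
      intro a ha b hb hadj
      have h1 : C a = c₀ := (Finset.mem_filter.mp (ha : a ∈ A)).2
      have h2 : C b = c₀ := (Finset.mem_filter.mp (hb : b ∈ A)).2
      exact C.valid (F.adj_sub hadj) (h1.trans h2.symm)
    have hpow : 2 ^ A.card ≤ subIndepCount F := by
      have hsub : ((fun (u : Finset V) => (u : Set V)) '' ↑A.powerset)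
          ⊆ {S : Set V | S ⊆ F.verts ∧ ∀ a ∈ S, ∀ b ∈ S, ¬ F.Adj a b} := by
        rintro S ⟨u, hu, rfl⟩
        have hu' : u ⊆ A := Finset.mem_powerset.mp (Finset.mem_coe.mp hu)
        constructor
        · intro x hx
          exact hAsub (hu' hx)
        · intro a ha b hb
          exact hAind a (hu' ha) b (hu' hb)
      have hcard : ((fun (u : Finset V) => (u : Set V)) '' ↑A.powerset).ncard = 2 ^ A.card := by
        rw [Set.ncard_image_of_injective _ (fun a b h => Finset.coe_injective h),
          Set.ncard_coe_finset, Finset.card_powerset]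
      calc 2 ^ A.card = ((fun (u : Finset V) => (u : Set V)) '' ↑A.powerset).ncard := hcard.symm
        _ ≤ subIndepCount F := Set.ncard_le_ncard hsub (Set.toFinite _)
    calc 2 * binomLe n (B : ℝ) ≤ 2 ^ A.card := key_ineq r n B A.card hr hn2r hna hBle
      _ ≤ subIndepCount F := hpow
end

section
/- For every fixed integer r ≥ 2 there exist a function b : ℕ → ℕ with b(Δ) = Θ(log Δ / (r · log log Δ)) and an integer Δ₀ such that every graph G of clique number at most r+1 and maximum degree Δ ≥ Δ₀ is b(Δ)-IS-rich. -/
open Filter MeasureTheory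

section IsRichAux

open Finset in
private lemma greedyIndep {V : Type} [Fintype V] [DecidableEq V] (G : SimpleGraph V)
    [DecidableRel G.Adj] (D : ℕ) (hD : ∀ v, (G.neighborFinset v).card ≤ D) (A : Finset V) :
    ∃ S : Finset V, S ⊆ A ∧ (∀ a ∈ S, ∀ b ∈ S, ¬ G.Adj a b) ∧ A.card ≤ S.card * (D + 1) := by
  induction A using Finset.strongInduction with
  | _ A ih =>
    rcases A.eq_empty_or_nonempty with rfl | ⟨v, hv⟩
    · exact ⟨∅, by simp⟩
    · set A' := A \ insert v (G.neighborFinset v) with hA'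
      have hvA' : v ∉ A' := by simp [hA']
      have hsub : A' ⊆ A := Finset.sdiff_subset
      have hss : A' ⊂ A := Finset.ssubset_iff_of_subset hsub |>.2 ⟨v, hv, hvA'⟩
      obtain ⟨S, hSA, hind, hcard⟩ := ih A' hss
      have hvS : v ∉ S := fun h => hvA' (hSA h)
      refine ⟨insert v S, ?_, ?_, ?_⟩
      · intro x hx
        rcases Finset.mem_insert.1 hx with rfl | hx
        · exact hv
        · exact hsub (hSA hx)
      · intro a ha b hb hadj
        have hnon : ∀ x ∈ S, ¬ G.Adj v x := by
          intro x hx hadj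
          have := hSA hx
          simp only [hA', Finset.mem_sdiff, Finset.mem_insert,
            SimpleGraph.mem_neighborFinset] at this
          exact this.2 (Or.inr hadj)
        rcases Finset.mem_insert.1 ha with h1 | h1 <;>
          rcases Finset.mem_insert.1 hb with h2 | h2
        · exact G.loopless.irrefl v (by rwa [h1, h2] at hadj)
        · exact hnon b h2 (h1 ▸ hadj)
        · exact hnon a h1 ((h2 ▸ hadj) : G.Adj a v).symm
        · exact hind a h1 b h2 hadj
      · have h1 : A.card ≤ A'.card + (D + 1) := by
          have : A ⊆ A' ∪ insert v (G.neighborFinset v) := by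
            intro x hx
            by_cases h : x ∈ insert v (G.neighborFinset v)
            · exact Finset.mem_union_right _ h
            · exact Finset.mem_union_left _ (Finset.mem_sdiff.2 ⟨hx, h⟩)
          calc A.card ≤ (A' ∪ insert v (G.neighborFinset v)).card := Finset.card_le_card this
            _ ≤ A'.card + (insert v (G.neighborFinset v)).card := Finset.card_union_le _ _
            _ ≤ A'.card + (D + 1) := by
                have := Finset.card_insert_le v (G.neighborFinset v)
                have := hD v
                omega
        rw [Finset.card_insert_of_notMem hvS]
        calc A.card ≤ A'.card + (D + 1) := h1
          _ ≤ S.card * (D + 1) + (D + 1) := by omega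
          _ = (S.card + 1) * (D + 1) := by ring

private lemma induce_nbhd_cliqueFree {V : Type} (G : SimpleGraph V) (v : V) (s : Set V)
    (hs : s ⊆ G.neighborSet v) (k : ℕ) (h : G.CliqueFree (k + 1)) :
    (G.induce s).CliqueFree k := by
  classical
  intro T hT
  have hvni : v ∉ T.image Subtype.val := by
    intro hmem
    obtain ⟨a, _, ha⟩ := Finset.mem_image.1 hmem
    have := hs a.2
    rw [ha] at this
    exact G.irrefl this
  apply h (insert v (T.image Subtype.val))
  constructor
  · intro a ha b hb hab
    simp only [Finset.coe_insert, Set.mem_insert_iff, Finset.coe_image, Set.mem_image,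
      Finset.mem_coe] at ha hb
    rcases ha with rfl | ⟨a', ha', rfl⟩
    · rcases hb with rfl | ⟨b', hb', rfl⟩
      · exact absurd rfl hab
      · exact hs b'.2
    · rcases hb with rfl | ⟨b', hb', rfl⟩
      · exact (hs a'.2 : G.Adj b a').symm
      · have hne : a' ≠ b' := fun hh => hab (by rw [hh])
        have := hT.1 (Finset.mem_coe.2 ha') (Finset.mem_coe.2 hb') hne
        simpa using this
  · rw [Finset.card_insert_of_notMem hvni,
      Finset.card_image_of_injective _ Subtype.val_injective, hT.2]

private lemma ramseyAux (s : ℕ) : ∀ (V : Type) [Fintype V] (G : SimpleGraph V),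
    Nonempty V → G.CliqueFree (s + 2) →
    ∃ S : Finset V, (∀ a ∈ S, ∀ b ∈ S, ¬ G.Adj a b) ∧
      Fintype.card V + 1 ≤ (2 * S.card) ^ (s + 1) := by
  induction s with
  | zero =>
    intro V _ G hne hcf
    have hbot : G = ⊥ := SimpleGraph.cliqueFree_two.1 hcf
    refine ⟨Finset.univ, ?_, ?_⟩
    · intro a _ b _ hadj
      rw [hbot] at hadj
      exact hadj
    · have h1 : 1 ≤ Fintype.card V := Fintype.card_pos
      rw [Finset.card_univ, pow_one]
      omega
  | succ s ih =>
    intro V _ G hne hcf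
    classical
    set 𝒮 : Finset (Finset V) :=
      Finset.univ.filter (fun S => ∀ a ∈ S, ∀ b ∈ S, ¬ G.Adj a b) with h𝒮
    have hmem𝒮 : ∀ S : Finset V, S ∈ 𝒮 ↔ ∀ a ∈ S, ∀ b ∈ S, ¬ G.Adj a b := by
      intro S; simp [h𝒮]
    have hempty : (∅ : Finset V) ∈ 𝒮 := (hmem𝒮 ∅).2 (by simp)
    obtain ⟨S₀, hS₀, hmax⟩ := Finset.exists_max_image 𝒮 Finset.card ⟨∅, hempty⟩
    set a := S₀.card with ha
    obtain ⟨v₀⟩ := hne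
    have ha1 : 1 ≤ a := by
      have : ({v₀} : Finset V) ∈ 𝒮 := (hmem𝒮 _).2 (by
        intro x hx y hy hadj
        rw [Finset.mem_singleton] at hx hy
        exact G.loopless.irrefl v₀ (by rwa [hx, hy] at hadj))
      simpa using hmax _ this
    have hpow1 : 1 ≤ (2 * a) ^ (s + 1) := Nat.one_le_pow _ _ (by omega)
    by_cases hdeg : ∃ v, (2 * a) ^ (s + 1) ≤ (G.neighborFinset v).card
    · exfalso
      obtain ⟨v, hv⟩ := hdeg
      have hcf' : (G.induce (↑(G.neighborFinset v) : Set V)).CliqueFree (s + 2) := by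
        apply induce_nbhd_cliqueFree G v _ _ (s + 2) hcf
        intro x hx
        simpa using hx
      have hne' : Nonempty ↑(↑(G.neighborFinset v) : Set V) := by
        rw [Set.nonempty_coe_sort, Finset.coe_nonempty, ← Finset.card_pos]
        omega
      obtain ⟨T, hTind, hTcard⟩ := ih _ (G.induce (↑(G.neighborFinset v) : Set V)) hne' hcf'
      have hTa : T.card ≤ a := by
        have himg : T.image Subtype.val ∈ 𝒮 := by
          refine (hmem𝒮 _).2 ?_
          intro x hx y hy hadj
          obtain ⟨x', hx', rfl⟩ := Finset.mem_image.1 hx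
          obtain ⟨y', hy', rfl⟩ := Finset.mem_image.1 hy
          exact hTind x' hx' y' hy' (by simpa using hadj)
        have := hmax _ himg
        rwa [Finset.card_image_of_injective _ Subtype.val_injective] at this
      have hcardW : Fintype.card ↑(↑(G.neighborFinset v) : Set V)
          = (G.neighborFinset v).card := by
        rw [← Nat.card_eq_fintype_card, Nat.card_coe_set_eq, Set.ncard_coe_finset]
      rw [hcardW] at hTcard
      have : (2 * T.card) ^ (s + 1) ≤ (2 * a) ^ (s + 1) :=
        Nat.pow_le_pow_left (by omega) _
      omega
    · push_neg at hdeg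
      set D := (2 * a) ^ (s + 1) - 1 with hD
      obtain ⟨S, _, hSind, hScard⟩ := greedyIndep G D (fun v => by
        have := hdeg v; omega) Finset.univ
      have hSa : S.card ≤ a := hmax _ ((hmem𝒮 _).2 hSind)
      refine ⟨S₀, (hmem𝒮 _).1 hS₀, ?_⟩
      have hD1 : D + 1 = (2 * a) ^ (s + 1) := by omega
      rw [Finset.card_univ, hD1] at hScard
      have h2 : Fintype.card V ≤ a * (2 * a) ^ (s + 1) := by
        calc Fintype.card V ≤ S.card * (2 * a) ^ (s + 1) := hScard
          _ ≤ a * (2 * a) ^ (s + 1) := Nat.mul_le_mul_right _ hSa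
      have h3 : (2 * a) ^ (s + 1 + 1) = 2 * a * (2 * a) ^ (s + 1) := by ring
      have h4 : 1 ≤ a * (2 * a) ^ (s + 1) := by
        calc 1 = 1 * 1 := by ring
          _ ≤ a * (2 * a) ^ (s + 1) := Nat.mul_le_mul ha1 hpow1
      calc Fintype.card V + 1 ≤ a * (2 * a) ^ (s + 1) + a * (2 * a) ^ (s + 1) := by omega
        _ ≤ 2 * a * (2 * a) ^ (s + 1) := by ring_nf; omega
        _ = (2 * a) ^ (s + 1 + 1) := h3.symm

private lemma binomLe_le_pow (n B : ℕ) (hn : 1 ≤ n) :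
    RandomCorr.binomLe n (B : ℝ) ≤ (n + 1) ^ (2 * B) := by
  unfold RandomCorr.binomLe
  rw [Nat.floor_natCast]
  calc ∑ i ∈ Finset.range (B + 1), n.choose i
      ≤ ∑ _i ∈ Finset.range (B + 1), (n + 1) ^ B := by
        apply Finset.sum_le_sum
        intro i hi
        calc n.choose i ≤ n ^ i := Nat.choose_le_pow n i
          _ ≤ (n + 1) ^ i := Nat.pow_le_pow_left (by omega) _
          _ ≤ (n + 1) ^ B := Nat.pow_le_pow_right (by omega)
              (Nat.lt_succ_iff.1 (Finset.mem_range.1 hi))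
    _ = (B + 1) * (n + 1) ^ B := by rw [Finset.sum_const, Finset.card_range, smul_eq_mul]
    _ ≤ 2 ^ B * (n + 1) ^ B := Nat.mul_le_mul_right _ (Nat.lt_two_pow_self (n := B))
    _ ≤ (n + 1) ^ B * (n + 1) ^ B := Nat.mul_le_mul_right _
        (Nat.pow_le_pow_left (by omega) _)
    _ = (n + 1) ^ (2 * B) := by rw [← pow_add]; ring_nf

private lemma binomLe_zero_left (b : ℝ) : RandomCorr.binomLe 0 b = 1 := by
  unfold RandomCorr.binomLe
  rw [Finset.sum_eq_single_of_mem 0 (Finset.mem_range.2 (by omega))]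
  · exact Nat.choose_zero_right 0
  · intro i _ hi
    exact Nat.choose_eq_zero_of_lt (by omega)

private lemma binomLe_zero_right (n : ℕ) : RandomCorr.binomLe n ((0 : ℕ) : ℝ) = 1 := by
  unfold RandomCorr.binomLe
  rw [Nat.floor_natCast]
  simp

private lemma two_pow_le_subIndepCount {V : Type} [Fintype V] {G : SimpleGraph V}
    (F : G.Subgraph) (S : Finset V) (hS : ↑S ⊆ F.verts)
    (hind : ∀ a ∈ S, ∀ b ∈ S, ¬ F.Adj a b) :
    2 ^ S.card ≤ RandomCorr.subIndepCount F := by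
  classical
  unfold RandomCorr.subIndepCount
  set 𝒜 : Set (Set V) := (fun T : Finset V => (↑T : Set V)) '' ↑S.powerset with h𝒜
  have hsub : 𝒜 ⊆ {X : Set V | X ⊆ F.verts ∧ ∀ a ∈ X, ∀ b ∈ X, ¬ F.Adj a b} := by
    rintro X ⟨T, hT, rfl⟩
    rw [Finset.mem_coe, Finset.mem_powerset] at hT
    refine ⟨subset_trans (Finset.coe_subset.2 hT) hS, ?_⟩
    intro x hx y hy
    exact hind x (hT hx) y (hT hy)
  have hfin : {X : Set V | X ⊆ F.verts ∧ ∀ a ∈ X, ∀ b ∈ X, ¬ F.Adj a b}.Finite :=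
    Set.Finite.subset ((Set.toFinite F.verts).finite_subsets) (fun X hX => hX.1)
  have h1 : 𝒜.ncard = 2 ^ S.card := by
    rw [h𝒜, Set.ncard_image_of_injective _ Finset.coe_injective, Set.ncard_coe_finset,
      Finset.card_powerset]
  calc 2 ^ S.card = 𝒜.ncard := h1.symm
    _ ≤ _ := Set.ncard_le_ncard hsub hfin

private lemma log_le_two_sqrt (x : ℝ) (hx : 0 < x) : Real.log x ≤ 2 * Real.sqrt x := by
  have h1 : Real.log (Real.sqrt x) ≤ Real.sqrt x - 1 :=
    Real.log_le_sub_one_of_pos (Real.sqrt_pos.2 hx)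
  have h2 : Real.log (Real.sqrt x) = Real.log x / 2 := Real.log_sqrt hx.le
  nlinarith [Real.sqrt_nonneg x]

end IsRichAux

set_option maxHeartbeats 2000000 in
/-- For every fixed `r ≥ 2` there are `b : ℕ → ℕ` with
`b(Δ) = Θ(log Δ / (r·log log Δ))` and `Δ₀` such that every graph of clique number at
most `r+1` and maximum degree `Δ ≥ Δ₀` is `b(Δ)`-IS-rich. -/
theorem cliqueFree_graph_isRich (r : ℕ) (hr : 2 ≤ r) :
    ∃ b : ℕ → ℕ,
      (∃ c₁ c₂ : ℝ, 0 < c₁ ∧ 0 < c₂ ∧ ∀ᶠ Δ : ℕ in Filter.atTop,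
        c₁ * (Real.log Δ / (r * Real.log (Real.log Δ))) ≤ (b Δ : ℝ) ∧
        (b Δ : ℝ) ≤ c₂ * (Real.log Δ / (r * Real.log (Real.log Δ)))) ∧
      ∃ Δ₀ : ℕ, ∀ (V : Type) [Fintype V] (G : SimpleGraph V) (Δ : ℕ),
        RandomCorr.maxDeg G = Δ → Δ₀ ≤ Δ → G.CliqueFree (r + 2) →
        RandomCorr.ISRich G (b Δ : ℝ) Δ := by
  classical
  have hrR : (2:ℝ) ≤ (r:ℝ) := by exact_mod_cast hr
  have hr0 : (0:ℝ) < r := by linarith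
  set vex : ℝ := (48 * (r:ℝ))^2 with hvex
  set N : ℕ := ⌈Real.exp vex⌉₊ + 1 with hN
  have hvex9216 : (9216:ℝ) ≤ vex := by rw [hvex]; nlinarith
  have hlogN : ∀ Δ : ℕ, N ≤ Δ → vex ≤ Real.log Δ := by
    intro Δ hΔ
    have hΔR : Real.exp vex ≤ (Δ:ℝ) := by
      have h1 : (N:ℝ) ≤ (Δ:ℝ) := by exact_mod_cast hΔ
      have h2 : Real.exp vex ≤ (N:ℝ) := by
        rw [hN]
        push_cast
        have := Nat.le_ceil (Real.exp vex)
        linarith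
      linarith
    calc vex = Real.log (Real.exp vex) := (Real.log_exp vex).symm
      _ ≤ Real.log Δ := Real.log_le_log (Real.exp_pos vex) hΔR
  clear_value vex
  have hfacts : ∀ Δ : ℕ, N ≤ Δ →
      (9216:ℝ) ≤ Real.log Δ ∧ (2:ℝ) ≤ Real.log (Real.log Δ) ∧
      24 * (r:ℝ) * Real.log (Real.log Δ) ≤ Real.log Δ := by
    clear_value N
    intro Δ hΔ
    have hL : vex ≤ Real.log Δ := hlogN Δ hΔ
    set L := Real.log Δ with hLdef
    have hL9216 : (9216:ℝ) ≤ L := le_trans hvex9216 hL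
    have hLpos : (0:ℝ) < L := by linarith
    have hLL2 : (2:ℝ) ≤ Real.log L := by
      have hexp2 : Real.exp 2 ≤ L := by
        have h1 : Real.exp 1 < 2.7182818286 := Real.exp_one_lt_d9
        have h2 : Real.exp 2 = Real.exp 1 * Real.exp 1 := by
          rw [← Real.exp_add]; norm_num
        nlinarith [Real.exp_pos 1]
      calc (2:ℝ) = Real.log (Real.exp 2) := (Real.log_exp 2).symm
        _ ≤ Real.log L := Real.log_le_log (Real.exp_pos 2) hexp2
    have hsqrt : Real.sqrt L * Real.sqrt L = L := Real.mul_self_sqrt hLpos.le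
    have hsqrtge : 48 * (r:ℝ) ≤ Real.sqrt L := by
      have h := Real.sqrt_le_sqrt hL
      rwa [hvex, Real.sqrt_sq (by positivity)] at h
    have hLLb : Real.log L ≤ 2 * Real.sqrt L := log_le_two_sqrt L hLpos
    refine ⟨hL9216, hLL2, ?_⟩
    nlinarith [Real.sqrt_nonneg L]
  clear_value N
  clear hlogN hvex9216
  refine ⟨fun Δ => ⌊Real.log Δ / (12 * r * Real.log (Real.log Δ))⌋₊, ?_, ?_⟩
  · refine ⟨1/24, 1/12, by norm_num, by norm_num, ?_⟩
    rw [Filter.eventually_atTop]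
    refine ⟨N, fun Δ hΔ => ?_⟩
    obtain ⟨hL9216, hLL2, hkey⟩ := hfacts Δ hΔ
    set L := Real.log Δ with hLdef
    set LL := Real.log L with hLLdef
    have hLLpos : (0:ℝ) < LL := by linarith
    have hpos : (0:ℝ) < 12 * r * LL := by nlinarith
    have hrne : (r:ℝ) ≠ 0 := by linarith
    have hLLne : LL ≠ 0 := by linarith
    have heq12 : (1/12) * (L/(r*LL)) = L/(12*r*LL) := by
      rw [mul_comm, mul_one_div, div_div]
      congr 1
      ring
    have heq24 : (1/24) * (L/(r*LL)) = L/(12*r*LL)/2 := by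
      rw [mul_comm, mul_one_div, div_div, div_div]
      congr 1
      ring
    constructor
    · have hfl : L/(12*r*LL) - 1 < (⌊L/(12*r*LL)⌋₊ : ℝ) := Nat.sub_one_lt_floor _
      have h2 : 2 ≤ L/(12*r*LL) := by
        rw [le_div_iff₀ hpos]
        nlinarith
      rw [heq24]
      linarith
    · have hfl : (⌊L/(12*r*LL)⌋₊:ℝ) ≤ L/(12*r*LL) :=
        Nat.floor_le (by positivity)
      rw [heq12]
      linarith
  · refine ⟨N, ?_⟩
    intro V _ G Δ hmaxdeg hΔ hcf F hnbr hlarge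
    beta_reduce at hlarge ⊢
    obtain ⟨v₀, hFnbr⟩ := hnbr
    obtain ⟨hL9216, hLL2, hkey⟩ := hfacts Δ hΔ
    set L := Real.log Δ with hLdef
    set LL := Real.log L with hLLdef
    have hLLpos : (0:ℝ) < LL := by linarith
    have hLpos : (0:ℝ) < L := by linarith
    set B : ℕ := ⌊L / (12 * r * LL)⌋₊ with hBdef
    set n : ℕ := F.verts.ncard with hndef
    clear_value L LL B n
    have hΔ1 : 1 ≤ Δ := le_trans (by omega) hΔ
    have hΔRpos : (0:ℝ) < (Δ:ℝ) := by exact_mod_cast hΔ1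
    have hrpow1 : (1:ℝ) ≤ (Δ:ℝ) ^ ((1:ℝ)/3) :=
      Real.one_le_rpow (by exact_mod_cast hΔ1) (by norm_num)
    -- n ≥ 1
    have hn1 : 1 ≤ n := by
      by_contra h
      have hn0 : n = 0 := by omega
      rw [hn0, binomLe_zero_left] at hlarge
      norm_num at hlarge
      linarith
    -- B ≥ 1
    have hB1 : 1 ≤ B := by
      by_contra h
      have hB0 : B = 0 := by omega
      rw [hB0] at hlarge
      rw [show ((0:ℕ):ℝ) = (((0:ℕ)):ℝ) from rfl, binomLe_zero_right] at hlarge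
      norm_num at hlarge
      linarith
    -- floor bound
    have hBle : 12 * (r:ℝ) * LL * B ≤ L := by
      have hpos : (0:ℝ) < 12 * r * LL := by nlinarith
      have h1 : (B:ℝ) ≤ L / (12 * r * LL) := by
        rw [hBdef]
        exact Nat.floor_le (div_nonneg hLpos.le hpos.le)
      calc 12 * (r:ℝ) * LL * B ≤ 12 * r * LL * (L / (12 * r * LL)) := by
            apply mul_le_mul_of_nonneg_left h1 hpos.le
        _ = L := by field_simp
    -- log inequality from largeness
    set y : ℝ := Real.log (n + 1) with hydef
    clear_value y
    have hypos : (0:ℝ) < y := by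
      rw [hydef]
      apply Real.log_pos
      have : (1:ℝ) < ((n:ℝ) + 1) := by exact_mod_cast Nat.lt_succ_of_le hn1
      push_cast
      linarith
    have hlog3 : L / 3 < 2 * B * y := by
      have hbin : RandomCorr.binomLe n (B:ℝ) ≤ (n + 1) ^ (2 * B) := binomLe_le_pow n B hn1
      have hlt : (Δ:ℝ) ^ ((1:ℝ)/3) < (((n + 1) ^ (2 * B) : ℕ) : ℝ) :=
        lt_of_lt_of_le hlarge (by exact_mod_cast hbin)
      have h2 : Real.log ((Δ:ℝ) ^ ((1:ℝ)/3)) < Real.log (((n + 1) ^ (2 * B) : ℕ) : ℝ) :=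
        Real.log_lt_log (Real.rpow_pos_of_pos hΔRpos _) hlt
      rw [Real.log_rpow hΔRpos] at h2
      have h3 : (((n + 1) ^ (2 * B) : ℕ) : ℝ) = ((n:ℝ) + 1) ^ (2 * B) := by push_cast; ring
      rw [h3, Real.log_pow] at h2
      have h4 : ((2 * B : ℕ) : ℝ) = 2 * (B:ℝ) := by push_cast; ring
      rw [h4] at h2
      rw [hydef]
      linarith
    have hy2rLL : 2 * (r:ℝ) * LL < y := by
      have hBpos : (0:ℝ) < (B:ℝ) := by exact_mod_cast hB1
      have h1 : 12 * (r:ℝ) * LL * B / 3 ≤ L / 3 := by linarith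
      have h2 : 4 * ((r:ℝ) * LL * B) < 2 * B * y := by
        calc 4 * ((r:ℝ) * LL * B) = 12 * r * LL * B / 3 := by ring
          _ ≤ L / 3 := h1
          _ < 2 * B * y := hlog3
      nlinarith
    -- Ramsey: independent set
    haveI : Fintype ↥F.verts := (Set.toFinite F.verts).fintype
    have hneF : Nonempty ↥F.verts := by
      apply Set.Nonempty.to_subtype
      apply Set.nonempty_of_ncard_ne_zero
      omega
    have hcf' : (G.induce F.verts).CliqueFree (r + 1) := by
      apply induce_nbhd_cliqueFree G v₀ F.verts hFnbr (r + 1)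
      have e : r + 1 + 1 = r + 2 := by omega
      rw [e]
      exact hcf
    have hcf'' : (G.induce F.verts).CliqueFree (r - 1 + 2) := by
      have e : r - 1 + 2 = r + 1 := by omega
      rw [e]
      exact hcf'
    obtain ⟨S, hSind, hScard⟩ := ramseyAux (r - 1) ↥F.verts (G.induce F.verts) hneF hcf''
    have hSexp : Fintype.card ↥F.verts + 1 ≤ (2 * S.card) ^ r := by
      have e : r - 1 + 1 = r := by omega
      rwa [e] at hScard
    have hcardF : Fintype.card ↥F.verts = n := by
      rw [← Nat.card_eq_fintype_card, Nat.card_coe_set_eq, hndef]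
    set α : ℕ := S.card with hα
    have hnα : n + 1 ≤ (2 * α) ^ r := by rwa [hcardF] at hSexp
    have hα1 : 1 ≤ α := by
      by_contra h
      have : α = 0 := by omega
      rw [this] at hnα
      simp at hnα
      rw [zero_pow (by omega : r ≠ 0)] at hnα
      omega
    -- image independent set and counting
    have hcard_img : (S.image Subtype.val).card = α :=
      Finset.card_image_of_injective _ Subtype.val_injective
    have hcount : 2 ^ α ≤ RandomCorr.subIndepCount F := by
      rw [← hcard_img]
      apply two_pow_le_subIndepCount F (S.image Subtype.val)
      · intro x hx
        simp only [Finset.coe_image, Set.mem_image, Finset.mem_coe] at hx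
        obtain ⟨x', _, rfl⟩ := hx
        exact x'.2
      · intro a ha b hb hadj
        obtain ⟨a', ha', rfl⟩ := Finset.mem_image.1 ha
        obtain ⟨b', hb', rfl⟩ := Finset.mem_image.1 hb
        have hG : G.Adj ↑a' ↑b' := F.adj_sub hadj
        exact hSind a' ha' b' hb' (by simpa using hG)
    -- real analysis chain
    have hexp_le : Real.exp (y / r) ≤ 2 * (α:ℝ) := by
      have hαpos : (0:ℝ) < 2 * (α:ℝ) := by
        have : (1:ℝ) ≤ (α:ℝ) := by exact_mod_cast hα1
        linarith
      have h1 : ((n:ℝ) + 1) ≤ (2 * (α:ℝ)) ^ r := by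
        have := hnα
        exact_mod_cast this
      have h2 : y ≤ Real.log ((2 * (α:ℝ)) ^ r) := by
        rw [hydef]
        apply Real.log_le_log (by positivity)
        push_cast
        exact_mod_cast h1
      rw [Real.log_pow] at h2
      have h3 : y / r ≤ Real.log (2 * (α:ℝ)) := by
        rw [div_le_iff₀ hr0]
        calc y ≤ (r:ℝ) * Real.log (2 * (α:ℝ)) := h2
          _ = Real.log (2 * (α:ℝ)) * r := by ring
      calc Real.exp (y / r) ≤ Real.exp (Real.log (2 * (α:ℝ))) := Real.exp_le_exp.2 h3
        _ = 2 * (α:ℝ) := Real.exp_log hαpos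
    have hexp_ge : L * (y / (2 * r)) ≤ Real.exp (y / r) := by
      have hsplit : y / r = y / (2 * r) + y / (2 * r) := by
        field_simp
        ring
      rw [hsplit, Real.exp_add]
      have hq : (0:ℝ) ≤ y / (2 * r) := by positivity
      have f1 : L ≤ Real.exp (y / (2 * r)) := by
        have h1 : LL ≤ y / (2 * r) := by
          rw [le_div_iff₀ (by linarith : (0:ℝ) < 2 * r)]
          nlinarith
        calc L = Real.exp LL := by rw [hLLdef]; exact (Real.exp_log hLpos).symm
          _ ≤ Real.exp (y / (2 * r)) := Real.exp_le_exp.2 h1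
      have f2 : y / (2 * r) ≤ Real.exp (y / (2 * r)) := by
        have := Real.add_one_le_exp (y / (2 * r))
        linarith
      calc L * (y / (2 * r)) ≤ Real.exp (y / (2 * r)) * Real.exp (y / (2 * r)) :=
            mul_le_mul f1 f2 hq (Real.exp_pos _).le
        _ = _ := rfl
    have hmid : 2 + 6 * (B:ℝ) * y ≤ L * (y / (2 * r)) := by
      have hBR : (1:ℝ) ≤ (B:ℝ) := by exact_mod_cast hB1
      have hy4r : 4 * (r:ℝ) ≤ y := by
        have h := mul_le_mul_of_nonneg_left hLL2 (by linarith : (0:ℝ) ≤ 2 * (r:ℝ))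
        nlinarith
      have t1 : (0:ℝ) ≤ 12 * (r:ℝ) * (B:ℝ) * y := by positivity
      have h1 : 24 * (r:ℝ) * B * y ≤ 12 * r * LL * B * y := by
        nlinarith [mul_nonneg t1 (by linarith : (0:ℝ) ≤ LL - 2)]
      have h2 : 12 * (r:ℝ) * LL * B * y ≤ L * y := by
        nlinarith [mul_le_mul_of_nonneg_right hBle hypos.le]
      have h3 : 8 * (r:ℝ) ≤ L * y := by
        nlinarith [mul_le_mul_of_nonneg_left hy4r hLpos.le,
          mul_pos hr0 (by linarith : (0:ℝ) < L - 2)]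
      have h4 : 8 * (r:ℝ) + 24 * r * B * y ≤ 2 * (L * y) := by linarith
      have h5 : L * (y / (2 * r)) = L * y / (2 * r) := by ring
      rw [h5, le_div_iff₀ (by linarith : (0:ℝ) < 2 * r)]
      nlinarith [h4]
    have hαge : (α:ℝ) ≥ 1 + 3 * B * y := by
      have h1 : 2 + 6 * (B:ℝ) * y ≤ 2 * (α:ℝ) := le_trans hmid (le_trans hexp_ge hexp_le)
      linarith
    -- final chain over ℝ
    have hfinal : ((2 * RandomCorr.binomLe n (B:ℝ) : ℕ) : ℝ)
        ≤ ((RandomCorr.subIndepCount F : ℕ) : ℝ) := by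
      have hbin : RandomCorr.binomLe n (B:ℝ) ≤ (n + 1) ^ (2 * B) := binomLe_le_pow n B hn1
      have c1 : ((2 * RandomCorr.binomLe n (B:ℝ) : ℕ) : ℝ)
          ≤ 2 * ((n:ℝ) + 1) ^ (2 * B) := by
        push_cast
        have : ((RandomCorr.binomLe n (B:ℝ) : ℕ) : ℝ) ≤ (((n + 1) ^ (2 * B) : ℕ) : ℝ) := by
          exact_mod_cast hbin
        push_cast at this
        linarith
      have c2 : ((n:ℝ) + 1) ^ (2 * B) = Real.exp ((2 * B) * y) := by
        have hn : ((n:ℝ) + 1) = Real.exp y := by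
          rw [hydef, Real.exp_log (by positivity)]
        rw [hn, ← Real.exp_nat_mul]
        push_cast
        ring_nf
      have c3 : Real.exp ((2 * B) * y) ≤ (2:ℝ) ^ (α - 1) := by
        have hlog2 : (0.6931471803:ℝ) < Real.log 2 := Real.log_two_gt_d9
        have hαm : (3:ℝ) * B * y ≤ ((α - 1 : ℕ) : ℝ) := by
          have : ((α - 1 : ℕ) : ℝ) = (α:ℝ) - 1 := by
            have : 1 ≤ α := hα1
            push_cast [Nat.cast_sub this]
            ring
          rw [this]
          linarith
        have hBy : (0:ℝ) ≤ (B:ℝ) * y := by positivity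
        have h1 : ((2:ℕ) * B : ℕ) * y ≤ ((α - 1 : ℕ) : ℝ) * Real.log 2 := by
          push_cast
          nlinarith
        calc Real.exp ((2 * B) * y) ≤ Real.exp (((α - 1 : ℕ) : ℝ) * Real.log 2) := by
              apply Real.exp_le_exp.2
              push_cast at h1 ⊢
              linarith
          _ = (2:ℝ) ^ (α - 1) := by
              rw [Real.exp_nat_mul, Real.exp_log (by norm_num : (0:ℝ) < 2)]
      have c4 : 2 * (2:ℝ) ^ (α - 1) = (2:ℝ) ^ α := by
        have e : α = (α - 1) + 1 := by omega
        conv_rhs => rw [e]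
        rw [pow_succ]
        ring
      have c5 : ((2:ℝ)) ^ α ≤ ((RandomCorr.subIndepCount F : ℕ) : ℝ) := by
        have : ((2 ^ α : ℕ) : ℝ) ≤ ((RandomCorr.subIndepCount F : ℕ) : ℝ) := by
          exact_mod_cast hcount
        push_cast at this
        linarith
      calc ((2 * RandomCorr.binomLe n (B:ℝ) : ℕ) : ℝ) ≤ 2 * ((n:ℝ) + 1) ^ (2 * B) := c1
        _ = 2 * Real.exp ((2 * B) * y) := by rw [c2]
        _ ≤ 2 * (2:ℝ) ^ (α - 1) := by linarith [c3]
        _ = (2:ℝ) ^ α := c4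
        _ ≤ _ := c5
    exact_mod_cast hfinal
end

section
/- For every function b : ℕ → ℝ with b(Δ) > 0 for all Δ and b(Δ) ≤ Δ^{o(1)} (i.e., for every ε > 0 there exists Δ_ε such that b(Δ) ≤ Δ^ε for all Δ ≥ Δ_ε), the following holds for every sufficiently large Δ. Let H be a graph of maximum degree at most Δ, let ℓ ≥ 5Δ/b(Δ) be an even integer, and let (L,M) be a correspondence assignment for H that is b(Δ)-IS-rich with respect to Δ. Let u ∈ V(H) be a vertex adjacent to all other vertices of H with |L(u)| = ℓ. If φ is a partial (L,M)-coloring of H with u ∉ dom(φ) chosen uniformly at random, then the probability that fewer than Δ^{7/12} colors of L(u) are available at u with respect to φ is less than 1/(8Δ³). -/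
open Filter MeasureTheory

namespace FewAux
open RandomCorr

variable {V : Type} [Fintype V] {H : SimpleGraph V}

variable (C : CorrAssignment H) (u : V)

/-- The set of partial colorings leaving `u` uncolored. -/
def Omega : Set (V → Option ℕ) := {φ | IsPartialColoring C φ ∧ φ u = none}

/-- The set of cover vertices blocking color `c` at `u`. -/
def SC (c : ℕ) (φ : V → Option ℕ) : Set (V × ℕ) :=
  {x | φ x.1 = some x.2 ∧ C.M u c x.1 x.2}

/-- The set of available colors at `u`. -/
def availS (φ : V → Option ℕ) : Set ℕ :=
  {c : ℕ | c ∈ C.L u ∧ ∀ v cv, φ v = some cv → ¬ C.M u c v cv}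

/-- The set of blocked colors at `u`. -/
def blockedS (φ : V → Option ℕ) : Set ℕ :=
  {c : ℕ | c ∈ C.L u ∧ (SC C u c φ).Nonempty}

open Classical in
/-- Uncolor all witnesses of color `c`. -/
noncomputable def sig (c : ℕ) (φ : V → Option ℕ) : V → Option ℕ := fun v =>
  match φ v with
  | none => none
  | some j => if C.M u c v j then none else some j

/-- Candidate witnesses for color `c` compatible with `ψ`. -/
def FC (c : ℕ) (ψ : V → Option ℕ) : Set (V × ℕ) :=
  {x | ψ x.1 = none ∧ x.2 ∈ C.L x.1 ∧ C.M u c x.1 x.2 ∧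
       ∀ v j, ψ v = some j → ¬ C.M x.1 x.2 v j}

open Classical in
/-- Recolor `ψ` by coloring every cover vertex in `S`. -/
noncomputable def rcl (ψ : V → Option ℕ) (S : Set (V × ℕ)) : V → Option ℕ := fun v =>
  if h : ∃ j, (v, j) ∈ S then some h.choose else ψ v

/-- Independence in the cover graph. -/
def Ind (S : Set (V × ℕ)) : Prop :=
  ∀ x ∈ S, ∀ y ∈ S, x ≠ y → ¬ C.M x.1 x.2 y.1 y.2

variable {C u}

lemma M_irrefl (x : V × ℕ) : ¬ C.M x.1 x.2 x.1 x.2 :=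
  fun h => (H.loopless.irrefl x.1) (C.adj_of _ _ _ _ h)

lemma seeing_unique {c v j j'} (h1 : C.M u c v j) (h2 : C.M u c v j') : j = j' :=
  C.matching u c v j j' h1 h2

lemma seen_unique {c c' v j} (h1 : C.M u c v j) (h2 : C.M u c' v j) : c = c' :=
  C.matching v j u c c' (C.symm _ _ _ _ h1) (C.symm _ _ _ _ h2)

lemma availS_iff {φ : V → Option ℕ} {c : ℕ} :
    c ∈ availS C u φ ↔ c ∈ C.L u ∧ SC C u c φ = ∅ := by
  unfold availS SC
  constructor
  · rintro ⟨h1, h2⟩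
    refine ⟨h1, Set.eq_empty_iff_forall_notMem.2 ?_⟩
    rintro ⟨v, j⟩ ⟨hv, hM⟩
    exact h2 v j hv hM
  · rintro ⟨h1, h2⟩
    refine ⟨h1, fun v cv hv hM => ?_⟩
    exact Set.eq_empty_iff_forall_notMem.1 h2 (v, cv) ⟨hv, hM⟩

lemma mem_blockedS_iff {φ : V → Option ℕ} {c : ℕ} :
    c ∈ blockedS C u φ ↔ c ∈ C.L u ∧ (SC C u c φ).Nonempty := Iff.rfl

lemma availS_subset (φ : V → Option ℕ) : availS C u φ ⊆ (C.L u : Set ℕ) :=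
  fun _ h => h.1

lemma blockedS_subset (φ : V → Option ℕ) : blockedS C u φ ⊆ (C.L u : Set ℕ) :=
  fun _ h => h.1

/-! ### sig spec lemmas -/

lemma sig_none {c : ℕ} {φ : V → Option ℕ} {v : V} (h : φ v = none) :
    sig C u c φ v = none := by
  unfold sig; rw [h]

lemma sig_some_of {c : ℕ} {φ : V → Option ℕ} {v : V} {j : ℕ}
    (h : φ v = some j) (hM : ¬ C.M u c v j) : sig C u c φ v = some j := by
  unfold sig; rw [h]; simp [hM]

lemma sig_strip {c : ℕ} {φ : V → Option ℕ} {v : V} {j : ℕ}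
    (h : φ v = some j) (hM : C.M u c v j) : sig C u c φ v = none := by
  unfold sig; rw [h]; simp [hM]

lemma sig_eq_some {c : ℕ} {φ : V → Option ℕ} {v : V} {j : ℕ} :
    sig C u c φ v = some j ↔ φ v = some j ∧ ¬ C.M u c v j := by
  constructor
  · intro h
    cases hv : φ v with
    | none => rw [sig_none hv] at h; cases h
    | some j' =>
      by_cases hM : C.M u c v j'
      · rw [sig_strip hv hM] at h; cases h
      · rw [sig_some_of hv hM] at h
        cases h
        exact ⟨rfl, hM⟩
  · rintro ⟨h, hM⟩; exact sig_some_of h hM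

lemma sig_mem_Omega {c : ℕ} {φ : V → Option ℕ} (hφ : φ ∈ Omega C u) :
    sig C u c φ ∈ Omega C u := by
  obtain ⟨⟨hL, hP⟩, hu⟩ := hφ
  refine ⟨⟨fun v j h => ?_, fun v w jv jw hv hw => ?_⟩, sig_none hu⟩
  · exact hL v j (sig_eq_some.1 h).1
  · exact hP v w jv jw (sig_eq_some.1 hv).1 (sig_eq_some.1 hw).1

lemma SC_sig_self {c : ℕ} {φ : V → Option ℕ} : SC C u c (sig C u c φ) = ∅ := by
  ext x
  simp only [SC, Set.mem_setOf_eq, Set.mem_empty_iff_false, iff_false, not_and]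
  intro h hM
  exact (sig_eq_some.1 h).2 hM

lemma SC_sig_other {c c' : ℕ} {φ : V → Option ℕ} (hne : c' ≠ c) :
    SC C u c' (sig C u c φ) = SC C u c' φ := by
  ext x
  simp only [SC, Set.mem_setOf_eq]
  constructor
  · rintro ⟨h, hM⟩
    exact ⟨(sig_eq_some.1 h).1, hM⟩
  · rintro ⟨h, hM⟩
    have hMc : ¬ C.M u c x.1 x.2 := fun hc => hne (seen_unique hM hc)
    exact ⟨sig_some_of h hMc, hM⟩

lemma availS_sig {c : ℕ} {φ : V → Option ℕ} (hc : c ∈ C.L u) :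
    availS C u (sig C u c φ) = insert c (availS C u φ) := by
  ext c'
  rw [availS_iff, Set.mem_insert_iff]
  constructor
  · rintro ⟨h1, h2⟩
    by_cases hcc : c' = c
    · exact Or.inl hcc
    · right
      rw [availS_iff]
      rw [SC_sig_other hcc] at h2
      exact ⟨h1, h2⟩
  · rintro (rfl | h)
    · exact ⟨hc, SC_sig_self⟩
    · rw [availS_iff] at h
      by_cases hcc : c' = c
      · subst hcc; exact ⟨h.1, SC_sig_self⟩
      · rw [SC_sig_other hcc]; exact h

/-! ### FC lemmas -/

lemma FC_uniq {c : ℕ} {ψ : V → Option ℕ} {v : V} {j j' : ℕ}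
    (h : (v, j) ∈ FC C u c ψ) (h' : (v, j') ∈ FC C u c ψ) : j = j' :=
  seeing_unique h.2.2.1 h'.2.2.1

lemma SC_subset_FC {c : ℕ} {φ : V → Option ℕ} (hφ : φ ∈ Omega C u) :
    SC C u c φ ⊆ FC C u c (sig C u c φ) := by
  rintro ⟨v, j⟩ ⟨hv, hM⟩
  refine ⟨sig_strip hv hM, hφ.1.1 v j hv, hM, fun w j' hw hM' => ?_⟩
  exact hφ.1.2 v w j j' hv (sig_eq_some.1 hw).1 hM'

lemma Ind_SC {c : ℕ} {φ : V → Option ℕ} (hφ : φ ∈ Omega C u) :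
    Ind C (SC C u c φ) := by
  rintro ⟨v, j⟩ ⟨hv, _⟩ ⟨w, j'⟩ ⟨hw, _⟩ _
  exact hφ.1.2 v w j j' hv hw

lemma Ind_mono {S T : Set (V × ℕ)} (hST : S ⊆ T) (hT : Ind C T) : Ind C S :=
  fun x hx y hy hxy => hT x (hST hx) y (hST hy) hxy

lemma Ind_empty : Ind C (∅ : Set (V × ℕ)) := fun x hx => absurd hx (Set.notMem_empty x)

/-! ### rcl lemmas -/

lemma FC_not_u {c : ℕ} {ψ : V → Option ℕ} {j : ℕ} : (u, j) ∉ FC C u c ψ := by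
  rintro ⟨_, _, hM, _⟩
  exact (H.loopless.irrefl u) (C.adj_of _ _ _ _ hM)

lemma rcl_some_of_mem {c : ℕ} {ψ : V → Option ℕ} {S : Set (V × ℕ)}
    (hS : S ⊆ FC C u c ψ) {v : V} {j : ℕ} (h : (v, j) ∈ S) :
    rcl ψ S v = some j := by
  have hex : ∃ j', (v, j') ∈ S := ⟨j, h⟩
  unfold rcl
  rw [dif_pos hex]
  exact congrArg some (FC_uniq (hS hex.choose_spec) (hS h))

lemma rcl_of_not_mem {ψ : V → Option ℕ} {S : Set (V × ℕ)} {v : V}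
    (h : ¬ ∃ j, (v, j) ∈ S) : rcl ψ S v = ψ v := by
  unfold rcl; rw [dif_neg h]

lemma rcl_empty (ψ : V → Option ℕ) : rcl ψ (∅ : Set (V × ℕ)) = ψ := by
  funext v
  exact rcl_of_not_mem (by simp)

/-! ### main rcl lemmas -/

lemma rcl_cases {ψ : V → Option ℕ} {S : Set (V × ℕ)} {c : ℕ}
    (hS : S ⊆ FC C u c ψ) {v : V} {j : ℕ} (h : rcl ψ S v = some j) :
    (v, j) ∈ S ∨ ((¬ ∃ j', (v, j') ∈ S) ∧ ψ v = some j) := by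
  by_cases hex : ∃ j', (v, j') ∈ S
  · left
    have := rcl_some_of_mem hS hex.choose_spec
    rw [this] at h
    cases h
    exact hex.choose_spec
  · right
    rw [rcl_of_not_mem hex] at h
    exact ⟨hex, h⟩

lemma rcl_mem_Omega {ψ : V → Option ℕ} {S : Set (V × ℕ)} {c : ℕ}
    (hψ : ψ ∈ Omega C u) (hS : S ⊆ FC C u c ψ) (hInd : Ind C S) :
    rcl ψ S ∈ Omega C u := by
  refine ⟨⟨fun v j h => ?_, fun v w jv jw hv hw hM => ?_⟩, ?_⟩
  · rcases rcl_cases hS h with hmem | ⟨_, hmem⟩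
    · exact (hS hmem).2.1
    · exact hψ.1.1 v j hmem
  · rcases rcl_cases hS hv with hv' | ⟨_, hv'⟩ <;> rcases rcl_cases hS hw with hw' | ⟨_, hw'⟩
    · by_cases heq : ((v, jv) : V × ℕ) = (w, jw)
      · injection heq with h1 h2
        subst h1; subst h2
        exact M_irrefl (v, jv) hM
      · exact hInd _ hv' _ hw' heq hM
    · exact (hS hv').2.2.2 w jw hw' hM
    · exact (hS hw').2.2.2 v jv hv' (C.symm _ _ _ _ hM)
    · exact hψ.1.2 v w jv jw hv' hw' hM
  · have hex : ¬ ∃ j, (u, j) ∈ S := by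
      rintro ⟨j, hj⟩; exact FC_not_u (hS hj)
    rw [rcl_of_not_mem hex]
    exact hψ.2

lemma sig_rcl {ψ : V → Option ℕ} {S : Set (V × ℕ)} {c : ℕ}
    (hc : c ∈ availS C u ψ) (hS : S ⊆ FC C u c ψ) :
    sig C u c (rcl ψ S) = ψ := by
  funext v
  by_cases hex : ∃ j, (v, j) ∈ S
  · obtain ⟨j, hj⟩ := hex
    have h1 : rcl ψ S v = some j := rcl_some_of_mem hS hj
    have h2 : C.M u c v j := (hS hj).2.2.1
    rw [sig_strip h1 h2, (hS hj).1]
  · have h1 : rcl ψ S v = ψ v := rcl_of_not_mem hex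
    cases hv : ψ v with
    | none => rw [sig_none (h1.trans hv)]
    | some j => rw [sig_some_of (h1.trans hv) (hc.2 v j hv)]

lemma SC_rcl {ψ : V → Option ℕ} {S : Set (V × ℕ)} {c : ℕ}
    (hc : c ∈ availS C u ψ) (hS : S ⊆ FC C u c ψ) :
    SC C u c (rcl ψ S) = S := by
  ext ⟨v, j⟩
  constructor
  · rintro ⟨h, hM⟩
    rcases rcl_cases hS h with hmem | ⟨_, hmem⟩
    · exact hmem
    · exact absurd hM (hc.2 v j hmem)
  · intro hmem
    exact ⟨rcl_some_of_mem hS hmem, (hS hmem).2.2.1⟩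

lemma SC_rcl_other {ψ : V → Option ℕ} {S : Set (V × ℕ)} {c c' : ℕ}
    (hS : S ⊆ FC C u c ψ) (hne : c' ≠ c) :
    SC C u c' (rcl ψ S) = SC C u c' ψ := by
  ext ⟨v, j⟩
  constructor
  · rintro ⟨h, hM⟩
    rcases rcl_cases hS h with hmem | ⟨_, hmem⟩
    · exact absurd (seen_unique hM (hS hmem).2.2.1) hne
    · exact ⟨hmem, hM⟩
  · rintro ⟨h, hM⟩
    have hex : ¬ ∃ j', (v, j') ∈ S := by
      rintro ⟨j', hj'⟩
      rw [(hS hj').1] at h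
      cases h
    exact ⟨(rcl_of_not_mem hex).trans h, hM⟩

lemma rcl_SC {φ : V → Option ℕ} {c : ℕ} (hφ : φ ∈ Omega C u) :
    rcl (sig C u c φ) (SC C u c φ) = φ := by
  funext v
  by_cases hex : ∃ j, (v, j) ∈ SC C u c φ
  · obtain ⟨j, hj⟩ := hex
    rw [rcl_some_of_mem (SC_subset_FC hφ) hj, hj.1]
  · rw [rcl_of_not_mem hex]
    cases hv : φ v with
    | none => exact sig_none hv
    | some j =>
      refine sig_some_of hv fun hM => ?_
      exact hex ⟨j, hv, hM⟩

lemma availS_rcl {ψ : V → Option ℕ} {S : Set (V × ℕ)} {c : ℕ}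
    (hc : c ∈ availS C u ψ) (hS : S ⊆ FC C u c ψ) (hne : S.Nonempty) :
    availS C u (rcl ψ S) = availS C u ψ \ {c} := by
  ext c'
  by_cases hcc : c' = c
  · subst hcc
    simp only [Set.mem_diff, Set.mem_singleton_iff, not_true, and_false, iff_false]
    rw [availS_iff, SC_rcl hc hS]
    rintro ⟨_, h⟩
    exact hne.ne_empty h
  · simp only [Set.mem_diff, Set.mem_singleton_iff, hcc, not_false_iff, and_true]
    rw [availS_iff, availS_iff, SC_rcl_other hS hcc]

/-! ### finiteness -/

lemma colorPairs_finite : {x : V × ℕ | x.2 ∈ C.L x.1}.Finite := by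
  have hsub : {x : V × ℕ | x.2 ∈ C.L x.1} ⊆ ⋃ v : V, ({v} : Set V) ×ˢ (C.L v : Set ℕ) := by
    rintro ⟨v, j⟩ hj
    exact Set.mem_iUnion.2 ⟨v, by simpa using hj⟩
  exact (Set.finite_iUnion fun v =>
    (Set.finite_singleton v).prod (C.L v).finite_toSet).subset hsub

lemma SC_finite {c : ℕ} {φ : V → Option ℕ} : (SC C u c φ).Finite :=
  colorPairs_finite.subset fun x hx => C.mem_right _ _ _ _ hx.2

lemma FC_finite {c : ℕ} {ψ : V → Option ℕ} : (FC C u c ψ).Finite :=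
  colorPairs_finite.subset fun x hx => hx.2.1

lemma availS_finite {φ : V → Option ℕ} : (availS C u φ).Finite :=
  (C.L u).finite_toSet.subset (availS_subset φ)

lemma blockedS_finite {φ : V → Option ℕ} : (blockedS C u φ).Finite :=
  (C.L u).finite_toSet.subset (blockedS_subset φ)

lemma Omega_finite : (Omega C u).Finite := by
  have hsub : Omega C u ⊆ Set.univ.pi
      (fun v : V => insert none (some '' ((C.L v : Set ℕ)))) := by
    intro φ hφ
    rw [Set.mem_univ_pi]
    intro v
    cases hv : φ v with
    | none => exact Set.mem_insert _ _
    | some j => exact Set.mem_insert_of_mem _ ⟨j, hφ.1.1 v j hv, rfl⟩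
  exact (Set.Finite.pi fun v =>
    (((C.L v).finite_toSet.image some).insert none)).subset hsub

lemma Omega_nonempty : (Omega C u).Nonempty := by
  refine ⟨fun _ => none, ⟨⟨fun v c h => ?_, fun v w cv cw hv _ => ?_⟩, rfl⟩⟩
  · cases h
  · cases hv

/-! ### counting availability and large colors -/

lemma avail_add_blocked (φ : V → Option ℕ) :
    (availS C u φ).ncard + (blockedS C u φ).ncard = (C.L u).card := by
  have hunion : availS C u φ ∪ blockedS C u φ = (C.L u : Set ℕ) := by
    ext c
    constructor
    · rintro (h | h) <;> exact h.1
    · intro h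
      rcases Set.eq_empty_or_nonempty (SC C u c φ) with he | hne
      · exact Or.inl (availS_iff.2 ⟨h, he⟩)
      · exact Or.inr ⟨h, hne⟩
  have hdisj : Disjoint (availS C u φ) (blockedS C u φ) := by
    rw [Set.disjoint_left]
    rintro c hc hc'
    rw [availS_iff] at hc
    exact hc'.2.ne_empty hc.2
  rw [← Set.ncard_union_eq hdisj availS_finite blockedS_finite, hunion,
    Set.ncard_coe_finset]

lemma availCount_sig {c : ℕ} {φ : V → Option ℕ} (hc : c ∈ C.L u)
    (hb : (SC C u c φ).Nonempty) :
    (availS C u (sig C u c φ)).ncard = (availS C u φ).ncard + 1 := by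
  rw [availS_sig hc]
  refine Set.ncard_insert_of_notMem (fun hmem => ?_) availS_finite
  rw [availS_iff] at hmem
  exact hb.ne_empty hmem.2

lemma availCount_rcl {ψ : V → Option ℕ} {S : Set (V × ℕ)} {c : ℕ}
    (hc : c ∈ availS C u ψ) (hS : S ⊆ FC C u c ψ) (hne : S.Nonempty) :
    (availS C u (rcl ψ S)).ncard + 1 = (availS C u ψ).ncard := by
  rw [availS_rcl hc hS hne]
  exact Set.ncard_diff_singleton_add_one hc availS_finite

variable (C u) in
/-- The set of colors with a large witness set. -/
def lgS (b' : ℕ) (φ : V → Option ℕ) : Set ℕ :=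
  {c | c ∈ C.L u ∧ b' ≤ (SC C u c φ).ncard}

lemma lgS_subset (b' : ℕ) (φ : V → Option ℕ) : lgS C u b' φ ⊆ (C.L u : Set ℕ) :=
  fun _ h => h.1

lemma lgS_finite {b' : ℕ} {φ : V → Option ℕ} : (lgS C u b' φ).Finite :=
  (C.L u).finite_toSet.subset (lgS_subset b' φ)

lemma lgS_sig {c : ℕ} {φ : V → Option ℕ} {b' : ℕ}
    (hsmall : (SC C u c φ).ncard < b') :
    lgS C u b' (sig C u c φ) = lgS C u b' φ := by
  ext c'
  by_cases hcc : c' = c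
  · subst hcc
    simp only [lgS, Set.mem_setOf_eq, SC_sig_self, Set.ncard_empty]
    constructor
    · rintro ⟨_, h⟩
      omega
    · rintro ⟨_, h⟩
      omega
  · simp only [lgS, Set.mem_setOf_eq, SC_sig_other hcc]

lemma lgS_rcl_small {ψ : V → Option ℕ} {S : Set (V × ℕ)} {c : ℕ} {b' : ℕ}
    (hc : c ∈ availS C u ψ) (hS : S ⊆ FC C u c ψ) (hsmall : S.ncard < b') :
    lgS C u b' (rcl ψ S) = lgS C u b' ψ := by
  ext c'
  by_cases hcc : c' = c
  · subst hcc
    simp only [lgS, Set.mem_setOf_eq, SC_rcl hc hS]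
    have h0 : SC C u c' ψ = ∅ := (availS_iff.1 hc).2
    rw [h0]
    simp only [Set.ncard_empty]
    constructor
    · rintro ⟨_, h⟩
      omega
    · rintro ⟨_, h⟩
      omega
  · simp only [lgS, Set.mem_setOf_eq, SC_rcl_other hS hcc]

lemma lgS_rcl_large {ψ : V → Option ℕ} {S : Set (V × ℕ)} {c : ℕ} {b' : ℕ}
    (hc : c ∈ availS C u ψ) (hS : S ⊆ FC C u c ψ) (hlarge : b' ≤ S.ncard) :
    lgS C u b' (rcl ψ S) = insert c (lgS C u b' ψ) := by
  ext c'
  by_cases hcc : c' = c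
  · subst hcc
    simp only [lgS, Set.mem_setOf_eq, SC_rcl hc hS, Set.mem_insert_iff, true_or, iff_true]
    exact ⟨hc.1, hlarge⟩
  · simp only [lgS, Set.mem_setOf_eq, SC_rcl_other hS hcc, Set.mem_insert_iff, hcc,
      false_or]

lemma lgS_count_rcl_large {ψ : V → Option ℕ} {S : Set (V × ℕ)} {c : ℕ} {b' : ℕ}
    (hc : c ∈ availS C u ψ) (hS : S ⊆ FC C u c ψ) (hlarge : b' ≤ S.ncard) (hb' : 1 ≤ b') :
    (lgS C u b' (rcl ψ S)).ncard = (lgS C u b' ψ).ncard + 1 := by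
  rw [lgS_rcl_large hc hS hlarge]
  refine Set.ncard_insert_of_notMem (fun hmem => ?_) lgS_finite
  have h0 : SC C u c ψ = ∅ := (availS_iff.1 hc).2
  simp only [lgS, Set.mem_setOf_eq] at hmem
  rw [h0] at hmem
  simp only [Set.ncard_empty] at hmem
  omega

/-! ### budget -/

/-- The set of colored cover vertices. -/
def ColV (φ : V → Option ℕ) : Set (V × ℕ) := {x | φ x.1 = some x.2}

lemma ColV_finite {φ : V → Option ℕ} (hφ : φ ∈ Omega C u) : (ColV φ).Finite :=
  colorPairs_finite.subset fun x hx => hφ.1.1 x.1 x.2 hx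

lemma SC_subset_ColV {c : ℕ} {φ : V → Option ℕ} : SC C u c φ ⊆ ColV φ :=
  fun _ hx => hx.1

lemma ColV_ncard_le {φ : V → Option ℕ} (hφ : φ ∈ Omega C u) :
    (ColV φ).ncard ≤ Fintype.card V - 1 := by
  have h1 : (ColV φ).ncard ≤ ((Set.univ : Set V) \ {u}).ncard := by
    refine Set.ncard_le_ncard_of_injOn Prod.fst ?_ ?_ ?_
    · rintro ⟨v, j⟩ hx
      refine ⟨Set.mem_univ _, ?_⟩
      simp only [Set.mem_singleton_iff]
      rintro rfl
      have hx' : φ v = some j := hx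
      rw [hφ.2] at hx'
      cases hx'
    · rintro ⟨v, j⟩ hx ⟨w, j'⟩ hy (h : v = w)
      subst h
      have hx' : φ v = some j := hx
      have hy' : φ v = some j' := hy
      have : some j = some j' := hx'.symm.trans hy'
      cases this
      rfl
    · exact Set.finite_univ.subset Set.diff_subset
  have h2 : ((Set.univ : Set V) \ {u}).ncard = Fintype.card V - 1 := by
    rw [Set.ncard_diff_singleton_of_mem (Set.mem_univ u), Set.ncard_univ,
      Nat.card_eq_fintype_card]
  omega

lemma degree_bound {Δ : ℕ} (hmax : maxDeg H ≤ Δ)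
    (hadj : ∀ v : V, v ≠ u → H.Adj u v) : Fintype.card V - 1 ≤ Δ := by
  have hset : H.neighborSet u = (Set.univ : Set V) \ {u} := by
    ext v
    simp only [SimpleGraph.mem_neighborSet, Set.mem_diff, Set.mem_univ, true_and,
      Set.mem_singleton_iff]
    constructor
    · intro h hh
      exact H.loopless.irrefl u (hh ▸ h)
    · exact hadj v
  have h2 : ((Set.univ : Set V) \ {u}).ncard = Fintype.card V - 1 := by
    rw [Set.ncard_diff_singleton_of_mem (Set.mem_univ u), Set.ncard_univ,
      Nat.card_eq_fintype_card]
  have h3 : (H.neighborSet u).ncard ≤ maxDeg H := by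
    unfold maxDeg
    exact Finset.le_sup (f := fun v => (H.neighborSet v).ncard) (Finset.mem_univ u)
  rw [hset, h2] at h3
  omega

lemma SC_disjoint {c c' : ℕ} {φ : V → Option ℕ} (h : c ≠ c') :
    Disjoint (SC C u c φ) (SC C u c' φ) := by
  rw [Set.disjoint_left]
  rintro x ⟨_, hM⟩ ⟨_, hM'⟩
  exact h (seen_unique hM hM')

lemma budget {Δ b' : ℕ} {φ : V → Option ℕ} (hφ : φ ∈ Omega C u)
    (hmax : maxDeg H ≤ Δ) (hadj : ∀ v : V, v ≠ u → H.Adj u v) :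
    b' * (lgS C u b' φ).ncard ≤ Δ := by
  classical
  set T : Finset ℕ := (lgS_finite (C := C) (u := u) (b' := b') (φ := φ)).toFinset with hT
  have hTcard : T.card = (lgS C u b' φ).ncard := (Set.ncard_eq_toFinset_card _ _).symm
  let t : ℕ → Finset (V × ℕ) :=
    fun c => Set.Finite.toFinset (SC_finite (C := C) (u := u) (c := c) (φ := φ))
  have hdisj : ∀ c ∈ T, ∀ c' ∈ T, c ≠ c' → Disjoint (t c) (t c') := by
    intro c _ c' _ hne
    rw [Set.Finite.disjoint_toFinset]
    exact SC_disjoint hne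
  have hsum : ∑ c ∈ T, (t c).card = (T.biUnion t).card := (Finset.card_biUnion hdisj).symm
  have hlow : T.card * b' ≤ ∑ c ∈ T, (t c).card := by
    rw [← smul_eq_mul]
    refine Finset.card_nsmul_le_sum T _ b' ?_
    intro c hc
    have hmem : b' ≤ (SC C u c φ).ncard := ((Set.Finite.mem_toFinset _).1 hc).2
    rwa [Set.ncard_eq_toFinset_card _ (SC_finite (C := C) (u := u) (c := c) (φ := φ))] at hmem
  have hup : (T.biUnion t).card ≤ (ColV_finite hφ).toFinset.card := by
    apply Finset.card_le_card
    intro x hx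
    rw [Finset.mem_biUnion] at hx
    obtain ⟨c, _, hxc⟩ := hx
    rw [Set.Finite.mem_toFinset] at hxc ⊢
    exact SC_subset_ColV hxc
  have hcol : (ColV_finite hφ).toFinset.card = (ColV φ).ncard :=
    (Set.ncard_eq_toFinset_card _ _).symm
  have h5 := ColV_ncard_le hφ
  have h6 := degree_bound hmax hadj
  have : b' * (lgS C u b' φ).ncard = T.card * b' := by rw [hTcard, Nat.mul_comm]
  omega

/-! ### the induced subgraph on a set of cover vertices -/

variable (C) in
/-- The induced subgraph of the cover graph on `X`. -/
def subG (X : Set (V × ℕ)) : (coverGraph C).Subgraph where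
  verts := X
  Adj x y := x ∈ X ∧ y ∈ X ∧ (coverGraph C).Adj x y
  adj_sub h := h.2.2
  edge_vert h := h.1
  symm := ⟨fun x y h => ⟨h.2.1, h.1, (coverGraph C).symm.symm _ _ h.2.2⟩⟩

lemma subG_indep_eq (X : Set (V × ℕ)) :
    subIndepCount (subG C X) = {S | S ⊆ X ∧ Ind C S}.ncard := by
  unfold subIndepCount
  congr 1
  ext S
  simp only [Set.mem_setOf_eq, subG]
  constructor
  · rintro ⟨hS, h⟩
    refine ⟨hS, fun x hx y hy hxy hM => ?_⟩
    exact h x hx y hy ⟨hS hx, hS hy, hM⟩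
  · rintro ⟨hS, h⟩
    refine ⟨hS, fun x hx y hy => ?_⟩
    rintro ⟨_, _, hM⟩
    by_cases hxy : x = y
    · subst hxy
      exact M_irrefl x hM
    · exact h x hx y hy hxy hM

lemma subG_nbr {c : ℕ} {ψ : V → Option ℕ} {X : Set (V × ℕ)} (hX : X ⊆ FC C u c ψ) :
    IsNbrSubgraph (subG C X) :=
  ⟨(u, c), fun x hx => (hX hx).2.2.1⟩

lemma rich_count {Δ : ℕ} {bb : ℝ} (hrich : C.ISRich bb Δ) {c : ℕ} {ψ : V → Option ℕ}
    {X : Set (V × ℕ)} (hX : X ⊆ FC C u c ψ)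
    (hbig : (Δ : ℝ) ^ ((1 : ℝ)/3) < (binomLe X.ncard bb : ℝ)) :
    2 * binomLe X.ncard bb ≤ {S | S ⊆ X ∧ Ind C S}.ncard := by
  have h := hrich (subG C X) (subG_nbr hX) hbig
  rwa [subG_indep_eq] at h

/-! ### counting subsets -/

lemma small_subsets_card {X : Set (V × ℕ)} (hfin : X.Finite) (m : ℕ) :
    {S | S ⊆ X ∧ S.ncard ≤ m}.ncard ≤ ∑ i ∈ Finset.range (m + 1), X.ncard.choose i := by
  classical
  set f : Set (V × ℕ) → Finset (V × ℕ) := fun S => hfin.toFinset.filter (· ∈ S) with hf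
  have hcoe : ∀ S, S ⊆ X → ((f S : Set (V × ℕ)) = S) := by
    intro S hS
    ext x
    simp only [hf, Finset.coe_filter, Set.mem_setOf_eq, Set.Finite.mem_toFinset]
    exact ⟨fun h => h.2, fun h => ⟨hS h, h⟩⟩
  set 𝒯 : Finset (Finset (V × ℕ)) :=
    (Finset.range (m + 1)).biUnion (fun i => hfin.toFinset.powersetCard i) with h𝒯
  have hmap : ∀ S ∈ {S | S ⊆ X ∧ S.ncard ≤ m}, f S ∈ (𝒯 : Set (Finset (V × ℕ)))  := by
    rintro S ⟨hS, hcard⟩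
    simp only [h𝒯, Finset.coe_biUnion, Finset.mem_coe, Finset.mem_range, Set.mem_iUnion,
      Finset.mem_powersetCard]
    refine ⟨(f S).card, ?_, ?_, rfl⟩
    · have hfc : ((f S : Set (V × ℕ))).ncard = (f S).card := Set.ncard_coe_finset _
      rw [hcoe S hS] at hfc
      omega
    · exact Finset.filter_subset _ _
  have hinj : Set.InjOn f {S | S ⊆ X ∧ S.ncard ≤ m} := by
    rintro S1 ⟨h1, _⟩ S2 ⟨h2, _⟩ heq
    rw [← hcoe S1 h1, ← hcoe S2 h2, heq]
  have h1 : {S | S ⊆ X ∧ S.ncard ≤ m}.ncard ≤ (𝒯 : Set (Finset (V × ℕ))).ncard :=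
    Set.ncard_le_ncard_of_injOn f hmap hinj (𝒯.finite_toSet)
  have h2 : (𝒯 : Set (Finset (V × ℕ))).ncard = 𝒯.card := Set.ncard_coe_finset _
  have h3 : 𝒯.card ≤ ∑ i ∈ Finset.range (m + 1), X.ncard.choose i := by
    refine (Finset.card_biUnion_le).trans ?_
    refine Finset.sum_le_sum ?_
    intro i _
    rw [Finset.card_powersetCard]
    have : hfin.toFinset.card = X.ncard := (Set.ncard_eq_toFinset_card _ _).symm
    rw [this]
  omega

lemma small_nonempty_card {X : Set (V × ℕ)} (hfin : X.Finite) {bb : ℝ} :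
    {S | S ⊆ X ∧ Ind C S ∧ S.ncard ≤ ⌊bb⌋₊ ∧ S.Nonempty}.ncard + 1 ≤ binomLe X.ncard bb := by
  classical
  set A := {S | S ⊆ X ∧ Ind C S ∧ S.ncard ≤ ⌊bb⌋₊ ∧ S.Nonempty} with hA
  have hsub : insert ∅ A ⊆ {S | S ⊆ X ∧ S.ncard ≤ ⌊bb⌋₊} := by
    rintro S (rfl | hS)
    · exact ⟨Set.empty_subset X, by simp⟩
    · exact ⟨hS.1, hS.2.2.1⟩
  have hfinA : ({S | S ⊆ X ∧ S.ncard ≤ ⌊bb⌋₊} : Set (Set (V × ℕ))).Finite :=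
    hfin.finite_subsets.subset (fun S hS => hS.1)
  have hinsert : (insert ∅ A).ncard = A.ncard + 1 := by
    refine Set.ncard_insert_of_notMem (fun hmem => ?_) (hfinA.subset hsub |>.subset (Set.subset_insert _ _))
    exact hmem.2.2.2.ne_empty rfl
  have h1 : (insert ∅ A).ncard ≤ {S | S ⊆ X ∧ S.ncard ≤ ⌊bb⌋₊}.ncard :=
    Set.ncard_le_ncard hsub hfinA
  have h2 := small_subsets_card hfin ⌊bb⌋₊
  unfold binomLe
  omega

lemma ind_split {X : Set (V × ℕ)} (hfin : X.Finite) (m : ℕ) :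
    {S | S ⊆ X ∧ Ind C S}.ncard =
      {S | S ⊆ X ∧ Ind C S ∧ S.ncard ≤ m}.ncard +
      {S | S ⊆ X ∧ Ind C S ∧ m + 1 ≤ S.ncard}.ncard := by
  have hfin1 : ({S | S ⊆ X ∧ Ind C S ∧ S.ncard ≤ m} : Set (Set (V × ℕ))).Finite :=
    hfin.finite_subsets.subset (fun S hS => hS.1)
  have hfin2 : ({S | S ⊆ X ∧ Ind C S ∧ m + 1 ≤ S.ncard} : Set (Set (V × ℕ))).Finite :=
    hfin.finite_subsets.subset (fun S hS => hS.1)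
  have hunion : {S | S ⊆ X ∧ Ind C S} =
      {S | S ⊆ X ∧ Ind C S ∧ S.ncard ≤ m} ∪ {S | S ⊆ X ∧ Ind C S ∧ m + 1 ≤ S.ncard} := by
    ext S
    simp only [Set.mem_setOf_eq, Set.mem_union]
    constructor
    · rintro ⟨h1, h2⟩
      by_cases h : S.ncard ≤ m
      · exact Or.inl ⟨h1, h2, h⟩
      · exact Or.inr ⟨h1, h2, by omega⟩
    · rintro (⟨h1, h2, _⟩ | ⟨h1, h2, _⟩) <;> exact ⟨h1, h2⟩
  have hdisj : Disjoint {S | S ⊆ X ∧ Ind C S ∧ S.ncard ≤ m}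
      {S | S ⊆ X ∧ Ind C S ∧ m + 1 ≤ S.ncard} := by
    rw [Set.disjoint_left]
    rintro S ⟨_, _, h1⟩ ⟨_, _, h2⟩
    omega
  rw [hunion, Set.ncard_union_eq hdisj hfin1 hfin2]

lemma rich_small_lt_large {Δ : ℕ} {bb : ℝ} (hrich : C.ISRich bb Δ) {c : ℕ}
    {ψ : V → Option ℕ} {X : Set (V × ℕ)} (hfin : X.Finite) (hX : X ⊆ FC C u c ψ)
    (hbig : (Δ : ℝ) ^ ((1 : ℝ)/3) < (binomLe X.ncard bb : ℝ)) :
    {S | S ⊆ X ∧ Ind C S ∧ S.ncard ≤ ⌊bb⌋₊ ∧ S.Nonempty}.ncard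
      < {S | S ⊆ X ∧ Ind C S ∧ ⌊bb⌋₊ + 1 ≤ S.ncard}.ncard := by
  have h1 := rich_count hrich hX hbig
  have h2 := ind_split (C := C) hfin ⌊bb⌋₊
  have h3 := small_nonempty_card (C := C) (bb := bb) hfin
  have h4 : {S | S ⊆ X ∧ Ind C S ∧ S.ncard ≤ ⌊bb⌋₊}.ncard ≤
      {S | S ⊆ X ∧ Ind C S ∧ S.ncard ≤ ⌊bb⌋₊ ∧ S.Nonempty}.ncard + 1 := by
    have hsub : {S | S ⊆ X ∧ Ind C S ∧ S.ncard ≤ ⌊bb⌋₊} ⊆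
        insert ∅ {S | S ⊆ X ∧ Ind C S ∧ S.ncard ≤ ⌊bb⌋₊ ∧ S.Nonempty} := by
      rintro S ⟨hS1, hS2, hS3⟩
      rcases Set.eq_empty_or_nonempty S with rfl | hne
      · exact Set.mem_insert _ _
      · exact Set.mem_insert_of_mem _ ⟨hS1, hS2, hS3, hne⟩
    refine (Set.ncard_le_ncard hsub ?_).trans (Set.ncard_insert_le _ _)
    exact (hfin.finite_subsets.subset (fun S hS => hS.1)).insert ∅
  omega

/-! ### fiber bijection -/

lemma fiber_count {ψ : V → Option ℕ} (hψ : ψ ∈ Omega C u) {c : ℕ}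
    (hc : c ∈ availS C u ψ) (P : Set (V × ℕ) → Prop) :
    {φ | φ ∈ Omega C u ∧ sig C u c φ = ψ ∧ P (SC C u c φ)}.ncard
      = {S | S ⊆ FC C u c ψ ∧ Ind C S ∧ P S}.ncard := by
  have himg : (fun φ => SC C u c φ) '' {φ | φ ∈ Omega C u ∧ sig C u c φ = ψ ∧ P (SC C u c φ)}
      = {S | S ⊆ FC C u c ψ ∧ Ind C S ∧ P S} := by
    ext S
    constructor
    · rintro ⟨φ, ⟨hφ, hsig, hP⟩, rfl⟩
      refine ⟨hsig ▸ SC_subset_FC hφ, Ind_SC hφ, hP⟩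
    · rintro ⟨hS, hInd, hP⟩
      refine ⟨rcl ψ S, ⟨rcl_mem_Omega hψ hS hInd, sig_rcl hc hS, ?_⟩, SC_rcl hc hS⟩
      rw [SC_rcl hc hS]
      exact hP
  have hinj : Set.InjOn (fun φ => SC C u c φ)
      {φ | φ ∈ Omega C u ∧ sig C u c φ = ψ ∧ P (SC C u c φ)} := by
    rintro φ1 ⟨hφ1, hsig1, _⟩ φ2 ⟨hφ2, hsig2, _⟩ heq
    have e1 : rcl (sig C u c φ1) (SC C u c φ1) = φ1 := rcl_SC hφ1
    have e2 : rcl (sig C u c φ2) (SC C u c φ2) = φ2 := rcl_SC hφ2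
    rw [hsig1] at e1
    rw [hsig2] at e2
    rw [← e1, ← e2]
    simp only at heq
    rw [heq]
  rw [← Set.ncard_image_of_injOn hinj, himg]

/-! ### color categories and level sets -/

variable (C u) in
/-- Color `c` is thin for `ψ`. -/
def thinb (Δ : ℕ) (bb : ℝ) (c : ℕ) (ψ : V → Option ℕ) : Prop :=
  (binomLe (FC C u c ψ).ncard bb : ℝ) ≤ (Δ : ℝ) ^ ((1 : ℝ)/3)

variable (C u) in
/-- Color `c` is thin, small and blocked in `φ`. -/
def tsb (Δ : ℕ) (bb : ℝ) (c : ℕ) (φ : V → Option ℕ) : Prop :=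
  c ∈ C.L u ∧ (SC C u c φ).Nonempty ∧ (SC C u c φ).ncard ≤ ⌊bb⌋₊ ∧
    thinb C u Δ bb c (sig C u c φ)

variable (C u) in
/-- Color `c` is rich, small and blocked in `φ`. -/
def rsb (Δ : ℕ) (bb : ℝ) (c : ℕ) (φ : V → Option ℕ) : Prop :=
  c ∈ C.L u ∧ (SC C u c φ).Nonempty ∧ (SC C u c φ).ncard ≤ ⌊bb⌋₊ ∧
    ¬ thinb C u Δ bb c (sig C u c φ)

variable (C u) in
/-- The level sets of the descent. -/
def DD (b' t' a lam : ℕ) : Set (V → Option ℕ) :=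
  {φ | φ ∈ Omega C u ∧ (availS C u φ).ncard ≤ t' + a ∧ lam ≤ (lgS C u b' φ).ncard}

lemma DD_finite {b' t' a lam : ℕ} : (DD C u b' t' a lam).Finite :=
  Omega_finite.subset fun _ h => h.1

lemma mem_availS_sig {c : ℕ} {φ : V → Option ℕ} (hcL : c ∈ C.L u) :
    c ∈ availS C u (sig C u c φ) :=
  availS_iff.2 ⟨hcL, SC_sig_self⟩

lemma ncard_colorfilter_eq {p : ℕ → Prop} [DecidablePred p] (hp : ∀ c, p c → c ∈ C.L u) :
    {c | p c}.ncard = ((C.L u).filter p).card := by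
  rw [← Set.ncard_coe_finset]
  congr 1
  ext c
  simp only [Finset.coe_filter, Set.mem_setOf_eq, Finset.mem_coe]
  exact ⟨fun h => ⟨hp c h, h⟩, fun h => h.2⟩

lemma sum_exchange (Afin : Finset (V → Option ℕ)) (p : ℕ → (V → Option ℕ) → Prop)
    [∀ c φ, Decidable (p c φ)] :
    ∑ c ∈ C.L u, (Afin.filter (fun φ => p c φ)).card
      = ∑ φ ∈ Afin, ((C.L u).filter (fun c => p c φ)).card := by
  simp only [Finset.card_filter]
  rw [Finset.sum_comm]

/-- The small nonempty independent subsets of the candidate set. -/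
lemma sne_finite {c : ℕ} {ψ : V → Option ℕ} {m : ℕ} :
    {S | S ⊆ FC C u c ψ ∧ Ind C S ∧ S.ncard ≤ m ∧ S.Nonempty}.Finite :=
  (FC_finite (c := c) (ψ := ψ)).finite_subsets.subset fun _ hS => hS.1

lemma lrg_finite {c : ℕ} {ψ : V → Option ℕ} {m : ℕ} :
    {S | S ⊆ FC C u c ψ ∧ Ind C S ∧ m ≤ S.ncard}.Finite :=
  (FC_finite (c := c) (ψ := ψ)).finite_subsets.subset fun _ hS => hS.1

lemma thin_sne_le {Δ : ℕ} {bb : ℝ} {c : ℕ} {ψ : V → Option ℕ}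
    (hthin : thinb C u Δ bb c ψ) :
    {S | S ⊆ FC C u c ψ ∧ Ind C S ∧ S.ncard ≤ ⌊bb⌋₊ ∧ S.Nonempty}.ncard
      ≤ ⌊(Δ : ℝ) ^ ((1 : ℝ)/3)⌋₊ := by
  have h1 := small_nonempty_card (C := C) (bb := bb)
    (FC_finite (C := C) (u := u) (c := c) (ψ := ψ))
  have h2 : binomLe (FC C u c ψ).ncard bb ≤ ⌊(Δ : ℝ) ^ ((1 : ℝ)/3)⌋₊ :=
    Nat.le_floor hthin
  omega

/-! ### counting lemma for thin colors -/

lemma countA (Δ : ℕ) (bb : ℝ) (b' t' a lam s : ℕ) (hb' : b' = ⌊bb⌋₊ + 1) :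
    s * {φ | φ ∈ DD C u b' t' a lam ∧ s ≤ {c | tsb C u Δ bb c φ}.ncard}.ncard
      ≤ ((t' + a + 1) * ⌊(Δ : ℝ) ^ ((1 : ℝ)/3)⌋₊) * (DD C u b' t' (a + 1) lam).ncard := by
  classical
  set m₀ := ⌊(Δ : ℝ) ^ ((1 : ℝ)/3)⌋₊ with hm₀
  set A : Set (V → Option ℕ) :=
    {φ | φ ∈ DD C u b' t' a lam ∧ s ≤ {c | tsb C u Δ bb c φ}.ncard} with hA
  have hAfin : A.Finite := DD_finite.subset fun _ h => h.1
  set Afin := hAfin.toFinset with hAfinset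
  set pairs := (Afin ×ˢ C.L u).filter (fun p => tsb C u Δ bb p.2 p.1) with hpairs
  -- step 1 : s * |A| ≤ |pairs|
  have step1 : s * Afin.card ≤ pairs.card := by
    have hcard : pairs.card = ∑ φ ∈ Afin, ((C.L u).filter (fun c => tsb C u Δ bb c φ)).card := by
      rw [hpairs, Finset.card_filter, Finset.sum_product]
      exact Finset.sum_congr rfl fun φ _ => (Finset.card_filter _ _).symm
    rw [hcard, Nat.mul_comm, ← smul_eq_mul]
    refine Finset.card_nsmul_le_sum Afin _ s ?_
    intro φ hφ
    have hφA : φ ∈ A := (Set.Finite.mem_toFinset _).1 hφ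
    have := hφA.2
    rwa [ncard_colorfilter_eq (fun c hc => hc.1)] at this
  -- the fiber map
  set β : (V → Option ℕ) × ℕ → (V → Option ℕ) := fun p => sig C u p.2 p.1 with hβ
  -- step 2 : per-fiber bound
  have step2 : ∀ ψ ∈ pairs.image β,
      (pairs.filter (fun p => β p = ψ)).card ≤ (t' + a + 1) * m₀ := by
    intro ψ hψim
    obtain ⟨p₀, hp₀, hβ₀⟩ := Finset.mem_image.1 hψim
    have hp₀' := Finset.mem_filter.1 hp₀
    have hφ₀A : p₀.1 ∈ A := (Set.Finite.mem_toFinset _).1 (Finset.mem_product.1 hp₀'.1).1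
    have htsb₀ : tsb C u Δ bb p₀.2 p₀.1 := hp₀'.2
    have hφ₀Ω : p₀.1 ∈ Omega C u := hφ₀A.1.1
    have hψΩ : ψ ∈ Omega C u := hβ₀ ▸ sig_mem_Omega hφ₀Ω
    have hβ₀' : sig C u p₀.2 p₀.1 = ψ := hβ₀
    have havailψ : (availS C u ψ).ncard ≤ t' + a + 1 := by
      have h1 : (availS C u (sig C u p₀.2 p₀.1)).ncard = (availS C u p₀.1).ncard + 1 :=
        availCount_sig htsb₀.1 htsb₀.2.1
      have h2 : (availS C u p₀.1).ncard ≤ t' + a := hφ₀A.1.2.1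
      rw [hβ₀'] at h1
      omega
    -- inner: bound fibers of the second-coordinate map
    refine (Finset.card_le_mul_card_image (f := Prod.snd) _ m₀ ?_).trans ?_
    · -- per color c, at most m₀ pairs
      intro c hcim
      by_cases hne : ((pairs.filter (fun p => β p = ψ)).filter (fun p => p.2 = c)).Nonempty
      · obtain ⟨q, hq⟩ := hne
        have hq1 := Finset.mem_filter.1 hq
        have hq2 := Finset.mem_filter.1 hq1.1
        have hqc : q.2 = c := hq1.2
        have hqψ : sig C u q.2 q.1 = ψ := hq2.2
        have htsbq : tsb C u Δ bb q.2 q.1 := (Finset.mem_filter.1 hq2.1).2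
        have hthin : thinb C u Δ bb c ψ := by
          rw [← hqc, ← hqψ]
          exact htsbq.2.2.2
        -- inject into small nonempty independent sets
        have hbound := thin_sne_le (C := C) (u := u) hthin
        refine (Finset.card_le_card_of_injOn (fun p => SC C u c p.1) ?_ ?_).trans
          (le_of_eq_of_le (Set.ncard_eq_toFinset_card _ (sne_finite (m := ⌊bb⌋₊))).symm hbound)
        · intro p hp
          have hp1 := Finset.mem_filter.1 hp
          have hpc : p.2 = c := hp1.2
          have hp2 := Finset.mem_filter.1 hp1.1
          have hpψ : sig C u p.2 p.1 = ψ := hp2.2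
          have htsbp : tsb C u Δ bb p.2 p.1 := (Finset.mem_filter.1 hp2.1).2
          have hpΩ : p.1 ∈ Omega C u :=
            ((Set.Finite.mem_toFinset _).1 (Finset.mem_product.1 (Finset.mem_filter.1 hp2.1).1).1).1.1
          rw [Finset.mem_coe, Set.Finite.mem_toFinset]
          subst hpc
          exact ⟨hpψ ▸ SC_subset_FC hpΩ, Ind_SC hpΩ, htsbp.2.2.1, htsbp.2.1⟩
        · intro p hp q hq heq
          simp only [Finset.coe_filter, Set.mem_setOf_eq] at hp hq
          obtain ⟨hpf, hpc⟩ := hp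
          obtain ⟨hqf, hqc⟩ := hq
          have hpf' := Finset.mem_filter.1 hpf
          have hqf' := Finset.mem_filter.1 hqf
          have hpψ : sig C u p.2 p.1 = ψ := hpf'.2
          have hqψ : sig C u q.2 q.1 = ψ := hqf'.2
          have hpΩ : p.1 ∈ Omega C u :=
            ((Set.Finite.mem_toFinset _).1 (Finset.mem_product.1 (Finset.mem_filter.1 hpf'.1).1).1).1.1
          have hqΩ : q.1 ∈ Omega C u :=
            ((Set.Finite.mem_toFinset _).1 (Finset.mem_product.1 (Finset.mem_filter.1 hqf'.1).1).1).1.1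
          have e1 : rcl (sig C u p.2 p.1) (SC C u p.2 p.1) = p.1 := rcl_SC hpΩ
          have e2 : rcl (sig C u q.2 q.1) (SC C u q.2 q.1) = q.1 := rcl_SC hqΩ
          rw [hpψ] at e1
          rw [hqψ] at e2
          have : p.1 = q.1 := by
            rw [← e1, ← e2, hpc, hqc]
            simp only at heq
            rw [heq]
          exact Prod.ext this (hpc.trans hqc.symm)
      · rw [Finset.not_nonempty_iff_eq_empty] at hne
        rw [hne, Finset.card_empty]
        exact Nat.zero_le _
    · -- number of colors at most t' + a + 1
      rw [Nat.mul_comm]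
      refine Nat.mul_le_mul_right m₀ ?_
      have himsub : ((pairs.filter (fun p => β p = ψ)).image Prod.snd)
          ⊆ (availS_finite (C := C) (u := u) (φ := ψ)).toFinset := by
        intro c hc
        obtain ⟨p, hp, rfl⟩ := Finset.mem_image.1 hc
        have hp1 := Finset.mem_filter.1 hp
        have hpψ : sig C u p.2 p.1 = ψ := hp1.2
        have htsbp : tsb C u Δ bb p.2 p.1 := (Finset.mem_filter.1 hp1.1).2
        rw [Set.Finite.mem_toFinset, ← hpψ]
        exact mem_availS_sig htsbp.1
      refine (Finset.card_le_card himsub).trans ?_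
      rw [← Set.ncard_eq_toFinset_card _ (availS_finite (C := C) (u := u) (φ := ψ))]
      exact havailψ
  have step2' : pairs.card ≤ ((t' + a + 1) * m₀) * (pairs.image β).card :=
    Finset.card_le_mul_card_image pairs _ step2
  -- step 3 : the image is inside the next level set
  have step3 : (pairs.image β).card ≤ (DD_finite (C := C) (u := u)
      (b' := b') (t' := t') (a := a + 1) (lam := lam)).toFinset.card := by
    refine Finset.card_le_card ?_
    intro ψ hψim
    obtain ⟨p₀, hp₀, hβ₀⟩ := Finset.mem_image.1 hψim
    have hp₀' := Finset.mem_filter.1 hp₀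
    have hφ₀A : p₀.1 ∈ A := (Set.Finite.mem_toFinset _).1 (Finset.mem_product.1 hp₀'.1).1
    have htsb₀ : tsb C u Δ bb p₀.2 p₀.1 := hp₀'.2
    have hφ₀Ω : p₀.1 ∈ Omega C u := hφ₀A.1.1
    have hβ₀' : sig C u p₀.2 p₀.1 = ψ := hβ₀
    rw [Set.Finite.mem_toFinset]
    refine ⟨hβ₀' ▸ sig_mem_Omega hφ₀Ω, ?_, ?_⟩
    · have h1 : (availS C u (sig C u p₀.2 p₀.1)).ncard = (availS C u p₀.1).ncard + 1 :=
        availCount_sig htsb₀.1 htsb₀.2.1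
      have h2 : (availS C u p₀.1).ncard ≤ t' + a := hφ₀A.1.2.1
      rw [hβ₀'] at h1
      omega
    · have h1 : lgS C u b' (sig C u p₀.2 p₀.1) = lgS C u b' p₀.1 :=
        lgS_sig (show (SC C u p₀.2 p₀.1).ncard < b' by
          have := htsb₀.2.2.1; omega)
      rw [← hβ₀', h1]
      exact hφ₀A.1.2.2
  have hAcard : Afin.card = A.ncard := (Set.ncard_eq_toFinset_card _ _).symm
  have hDcard : (DD_finite (C := C) (u := u) (b' := b') (t' := t') (a := a + 1)
      (lam := lam)).toFinset.card = (DD C u b' t' (a + 1) lam).ncard :=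
    (Set.ncard_eq_toFinset_card _ _).symm
  calc s * A.ncard = s * Afin.card := by rw [hAcard]
    _ ≤ pairs.card := step1
    _ ≤ ((t' + a + 1) * m₀) * (pairs.image β).card := step2'
    _ ≤ ((t' + a + 1) * m₀) * (DD C u b' t' (a + 1) lam).ncard := by
        refine Nat.mul_le_mul_left _ ?_
        rw [← hDcard]
        exact step3

/-! ### counting lemma for rich colors -/

lemma countB (Δ : ℕ) (bb : ℝ) (hrich : C.ISRich bb Δ) (b' t' a lam r : ℕ)
    (hb' : b' = ⌊bb⌋₊ + 1) (hmax : maxDeg H ≤ Δ) (hadj : ∀ v : V, v ≠ u → H.Adj u v) :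
    r * b' * {φ | φ ∈ DD C u b' t' a lam ∧ r ≤ {c | rsb C u Δ bb c φ}.ncard}.ncard
      ≤ Δ * (DD C u b' t' a (lam + 1)).ncard := by
  classical
  set A : Set (V → Option ℕ) :=
    {φ | φ ∈ DD C u b' t' a lam ∧ r ≤ {c | rsb C u Δ bb c φ}.ncard} with hA
  have hAfin : A.Finite := DD_finite.subset fun _ h => h.1
  set Afin := hAfin.toFinset with hAfinset
  set DDfin := (DD_finite (C := C) (u := u) (b' := b') (t' := t') (a := a)
    (lam := lam + 1)).toFinset with hDDfin
  -- step 1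
  have step1 : r * Afin.card
      ≤ ∑ c ∈ C.L u, (Afin.filter (fun φ => rsb C u Δ bb c φ)).card := by
    rw [sum_exchange Afin (fun c φ => rsb C u Δ bb c φ), Nat.mul_comm, ← smul_eq_mul]
    refine Finset.card_nsmul_le_sum Afin _ r ?_
    intro φ hφ
    have hφA : φ ∈ A := (Set.Finite.mem_toFinset _).1 hφ
    have := hφA.2
    rwa [ncard_colorfilter_eq (fun c hc => hc.1)] at this
  -- step 2 : per color, the rich-small-blocked colorings inject into the next level
  have step2 : ∀ c ∈ C.L u, (Afin.filter (fun φ => rsb C u Δ bb c φ)).card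
      ≤ (DDfin.filter (fun ψ' => c ∈ lgS C u b' ψ')).card := by
    intro c hcL
    set 𝒜 := Afin.filter (fun φ => rsb C u Δ bb c φ) with h𝒜
    set ℬ := DDfin.filter (fun ψ' => c ∈ lgS C u b' ψ') with hℬ
    set β : (V → Option ℕ) → (V → Option ℕ) := sig C u c with hβ2
    rw [Finset.card_eq_sum_card_image β 𝒜, Finset.card_eq_sum_card_image β ℬ]
    have key : ∀ ψ ∈ 𝒜.image β,
        (𝒜.filter (fun φ => β φ = ψ)).card ≤ (ℬ.filter (fun φ => β φ = ψ)).card ∧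
          ψ ∈ ℬ.image β := by
      intro ψ hψim
      obtain ⟨φ₀, hφ₀m, hβ₀⟩ := Finset.mem_image.1 hψim
      have hφ₀f := Finset.mem_filter.1 hφ₀m
      have hφ₀A : φ₀ ∈ A := (Set.Finite.mem_toFinset _).1 hφ₀f.1
      have hrsb₀ : rsb C u Δ bb c φ₀ := hφ₀f.2
      have hφ₀Ω : φ₀ ∈ Omega C u := hφ₀A.1.1
      have hβ₀' : sig C u c φ₀ = ψ := hβ₀
      have hψΩ : ψ ∈ Omega C u := hβ₀' ▸ sig_mem_Omega hφ₀Ω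
      have hcav : c ∈ availS C u ψ := hβ₀' ▸ mem_availS_sig hrsb₀.1
      have hrichψ : ¬ thinb C u Δ bb c ψ := hβ₀' ▸ hrsb₀.2.2.2
      have havail₀ : (availS C u ψ).ncard = (availS C u φ₀).ncard + 1 := by
        rw [← hβ₀']; exact availCount_sig hrsb₀.1 hrsb₀.2.1
      have hlg₀ : lgS C u b' ψ = lgS C u b' φ₀ := by
        rw [← hβ₀']
        exact lgS_sig (show (SC C u c φ₀).ncard < b' by
          have := hrsb₀.2.2.1; omega)
      have hbig : (Δ : ℝ) ^ ((1 : ℝ)/3) < (binomLe (FC C u c ψ).ncard bb : ℝ) := by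
        unfold thinb at hrichψ
        push_neg at hrichψ
        exact hrichψ
      have hsmall_lt : {S | S ⊆ FC C u c ψ ∧ Ind C S ∧ S.ncard ≤ ⌊bb⌋₊ ∧ S.Nonempty}.ncard
          < {S | S ⊆ FC C u c ψ ∧ Ind C S ∧ ⌊bb⌋₊ + 1 ≤ S.ncard}.ncard :=
        rich_small_lt_large hrich FC_finite (subset_refl _) hbig
      -- recoloring a large independent set lands in ℬ
      have hmemB : ∀ S ∈ {S | S ⊆ FC C u c ψ ∧ Ind C S ∧ ⌊bb⌋₊ + 1 ≤ S.ncard},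
          rcl ψ S ∈ ℬ ∧ β (rcl ψ S) = ψ := by
        rintro S ⟨hSsub, hSInd, hSlarge⟩
        have hrclΩ : rcl ψ S ∈ Omega C u := rcl_mem_Omega hψΩ hSsub hSInd
        have hSne : S.Nonempty := by
          rcases Set.eq_empty_or_nonempty S with rfl | h
          · rw [Set.ncard_empty] at hSlarge; omega
          · exact h
        have havailr : (availS C u (rcl ψ S)).ncard + 1 = (availS C u ψ).ncard :=
          availCount_rcl hcav hSsub hSne
        have hlgr : (lgS C u b' (rcl ψ S)).ncard = (lgS C u b' ψ).ncard + 1 :=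
          lgS_count_rcl_large hcav hSsub (by omega) (by omega)
        have hβr : β (rcl ψ S) = ψ := sig_rcl hcav hSsub
        refine ⟨Finset.mem_filter.2 ⟨?_, ?_⟩, hβr⟩
        · rw [hDDfin, Set.Finite.mem_toFinset]
          refine ⟨hrclΩ, ?_, ?_⟩
          · have h2 : (availS C u φ₀).ncard ≤ t' + a := hφ₀A.1.2.1
            omega
          · have h3 : lam ≤ (lgS C u b' φ₀).ncard := hφ₀A.1.2.2
            rw [hlgr, hlg₀]
            omega
        · rw [lgS_rcl_large hcav hSsub (by omega)]
          exact Set.mem_insert _ _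
      constructor
      · -- fiber cardinality comparison
        have hAfiber : (𝒜.filter (fun φ => β φ = ψ)).card
            ≤ {S | S ⊆ FC C u c ψ ∧ Ind C S ∧ S.ncard ≤ ⌊bb⌋₊ ∧ S.Nonempty}.ncard := by
          rw [Set.ncard_eq_toFinset_card _ (sne_finite (m := ⌊bb⌋₊))]
          refine Finset.card_le_card_of_injOn (fun φ => SC C u c φ) ?_ ?_
          · intro φ hφm
            have hφf := Finset.mem_filter.1 hφm
            have hφf2 := Finset.mem_filter.1 hφf.1
            have hφΩ : φ ∈ Omega C u := ((Set.Finite.mem_toFinset _).1 hφf2.1).1.1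
            have hrsbφ : rsb C u Δ bb c φ := hφf2.2
            have hβφ : sig C u c φ = ψ := hφf.2
            rw [Finset.mem_coe, Set.Finite.mem_toFinset]
            exact ⟨hβφ ▸ SC_subset_FC hφΩ, Ind_SC hφΩ, hrsbφ.2.2.1, hrsbφ.2.1⟩
          · intro φ1 h1 φ2 h2 heq
            simp only [Finset.coe_filter, Set.mem_setOf_eq] at h1 h2
            obtain ⟨h1f, h1ψ⟩ := h1
            obtain ⟨h2f, h2ψ⟩ := h2
            have h1Ω : φ1 ∈ Omega C u :=
              ((Set.Finite.mem_toFinset _).1 (Finset.mem_filter.1 h1f).1).1.1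
            have h2Ω : φ2 ∈ Omega C u :=
              ((Set.Finite.mem_toFinset _).1 (Finset.mem_filter.1 h2f).1).1.1
            have e1 : rcl (sig C u c φ1) (SC C u c φ1) = φ1 := rcl_SC h1Ω
            have e2 : rcl (sig C u c φ2) (SC C u c φ2) = φ2 := rcl_SC h2Ω
            have h1ψ' : sig C u c φ1 = ψ := h1ψ
            have h2ψ' : sig C u c φ2 = ψ := h2ψ
            rw [h1ψ'] at e1
            rw [h2ψ'] at e2
            simp only at heq
            rw [← e1, ← e2, heq]
        have hBfiber : {S | S ⊆ FC C u c ψ ∧ Ind C S ∧ ⌊bb⌋₊ + 1 ≤ S.ncard}.ncard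
            ≤ (ℬ.filter (fun φ => β φ = ψ)).card := by
          rw [Set.ncard_eq_toFinset_card _ (lrg_finite (m := ⌊bb⌋₊ + 1))]
          refine Finset.card_le_card_of_injOn (fun S => rcl ψ S) ?_ ?_
          · intro S hSm
            rw [Finset.mem_coe, Set.Finite.mem_toFinset] at hSm
            exact Finset.mem_filter.2 ⟨(hmemB S hSm).1, (hmemB S hSm).2⟩
          · intro S1 h1 S2 h2 heq
            rw [Set.Finite.coe_toFinset] at h1 h2
            have e1 : SC C u c (rcl ψ S1) = S1 := SC_rcl hcav h1.1
            have e2 : SC C u c (rcl ψ S2) = S2 := SC_rcl hcav h2.1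
            simp only at heq
            rw [← e1, ← e2, heq]
        omega
      · -- the fiber base is hit from ℬ as well
        have hne : {S | S ⊆ FC C u c ψ ∧ Ind C S ∧ ⌊bb⌋₊ + 1 ≤ S.ncard}.Nonempty :=
          Set.nonempty_of_ncard_ne_zero (by omega)
        obtain ⟨S₀, hS₀⟩ := hne
        exact Finset.mem_image.2 ⟨rcl ψ S₀, (hmemB S₀ hS₀).1, (hmemB S₀ hS₀).2⟩
    calc ∑ ψ ∈ 𝒜.image β, (𝒜.filter (fun φ => β φ = ψ)).card
        ≤ ∑ ψ ∈ 𝒜.image β, (ℬ.filter (fun φ => β φ = ψ)).card :=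
          Finset.sum_le_sum fun ψ hψ => (key ψ hψ).1
      _ ≤ ∑ ψ ∈ ℬ.image β, (ℬ.filter (fun φ => β φ = ψ)).card :=
          Finset.sum_le_sum_of_subset fun ψ hψ => (key ψ hψ).2
  -- step 3 : the budget
  have step3 : b' * ∑ c ∈ C.L u, (DDfin.filter (fun ψ' => c ∈ lgS C u b' ψ')).card
      ≤ Δ * DDfin.card := by
    rw [sum_exchange DDfin (fun c ψ' => c ∈ lgS C u b' ψ'), Finset.mul_sum]
    calc ∑ ψ' ∈ DDfin, b' * ((C.L u).filter (fun c => c ∈ lgS C u b' ψ')).card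
        ≤ ∑ _ψ' ∈ DDfin, Δ := by
          refine Finset.sum_le_sum ?_
          intro ψ' hψ'
          have hψ'D : ψ' ∈ DD C u b' t' a (lam + 1) := (Set.Finite.mem_toFinset _).1 hψ'
          have hcards : ((C.L u).filter (fun c => c ∈ lgS C u b' ψ')).card
              = (lgS C u b' ψ').ncard :=
            (ncard_colorfilter_eq (p := fun c => c ∈ lgS C u b' ψ')
              (fun c hc => hc.1)).symm
          rw [hcards]
          exact budget hψ'D.1 hmax hadj
      _ = Δ * DDfin.card := by rw [Finset.sum_const, smul_eq_mul, Nat.mul_comm]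
  -- combine
  have hAcard : Afin.card = A.ncard := (Set.ncard_eq_toFinset_card _ _).symm
  have hDcard : DDfin.card = (DD C u b' t' a (lam + 1)).ncard :=
    (Set.ncard_eq_toFinset_card _ _).symm
  calc r * b' * A.ncard = b' * (r * Afin.card) := by rw [hAcard]; ring
    _ ≤ b' * ∑ c ∈ C.L u, (Afin.filter (fun φ => rsb C u Δ bb c φ)).card :=
        Nat.mul_le_mul_left b' step1
    _ ≤ b' * ∑ c ∈ C.L u, (DDfin.filter (fun ψ' => c ∈ lgS C u b' ψ')).card :=
        Nat.mul_le_mul_left b' (Finset.sum_le_sum fun c hc => step2 c hc)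
    _ ≤ Δ * DDfin.card := step3
    _ = Δ * (DD C u b' t' a (lam + 1)).ncard := by rw [hDcard]

/-! ### case split and descent -/

lemma tsbS_finite {Δ : ℕ} {bb : ℝ} {φ : V → Option ℕ} :
    {c | tsb C u Δ bb c φ}.Finite :=
  (C.L u).finite_toSet.subset fun _ h => h.1

lemma rsbS_finite {Δ : ℕ} {bb : ℝ} {φ : V → Option ℕ} :
    {c | rsb C u Δ bb c φ}.Finite :=
  (C.L u).finite_toSet.subset fun _ h => h.1

lemma case_split (Δ ℓ : ℕ) (bb : ℝ) (b' t' a lam s r : ℕ) (hb' : b' = ⌊bb⌋₊ + 1)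
    (hL : (C.L u).card = ℓ) (hmax : maxDeg H ≤ Δ) (hadj : ∀ v : V, v ≠ u → H.Adj u v)
    (hnum : b' * (t' + a + s + r) + Δ < b' * ℓ) :
    DD C u b' t' a lam ⊆
      {φ | φ ∈ DD C u b' t' a lam ∧ s ≤ {c | tsb C u Δ bb c φ}.ncard} ∪
      {φ | φ ∈ DD C u b' t' a lam ∧ r ≤ {c | rsb C u Δ bb c φ}.ncard} := by
  intro φ hφ
  rw [Set.mem_union]
  by_contra hcon
  push_neg at hcon
  obtain ⟨hc1, hc2⟩ := hcon
  simp only [Set.mem_setOf_eq, not_and, not_le] at hc1 hc2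
  have htsb : {c | tsb C u Δ bb c φ}.ncard < s := hc1 hφ
  have hrsb : {c | rsb C u Δ bb c φ}.ncard < r := hc2 hφ
  have hΩ : φ ∈ Omega C u := hφ.1
  have h1 : (availS C u φ).ncard + (blockedS C u φ).ncard = ℓ := by
    rw [avail_add_blocked, hL]
  have h2 : (availS C u φ).ncard ≤ t' + a := hφ.2.1
  have h3 : blockedS C u φ ⊆
      {c | tsb C u Δ bb c φ} ∪ ({c | rsb C u Δ bb c φ} ∪ lgS C u b' φ) := by
    rintro c ⟨hcL, hcne⟩
    by_cases hsz : (SC C u c φ).ncard ≤ ⌊bb⌋₊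
    · by_cases hth : thinb C u Δ bb c (sig C u c φ)
      · exact Or.inl ⟨hcL, hcne, hsz, hth⟩
      · exact Or.inr (Or.inl ⟨hcL, hcne, hsz, hth⟩)
    · exact Or.inr (Or.inr ⟨hcL, by omega⟩)
  have h4 : (blockedS C u φ).ncard ≤
      {c | tsb C u Δ bb c φ}.ncard + ({c | rsb C u Δ bb c φ}.ncard + (lgS C u b' φ).ncard) := by
    refine (Set.ncard_le_ncard h3 ?_).trans ?_
    · exact (tsbS_finite.union (rsbS_finite.union lgS_finite))
    · exact (Set.ncard_union_le _ _).trans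
        (Nat.add_le_add_left (Set.ncard_union_le _ _) _)
  have h5 : b' * (lgS C u b' φ).ncard ≤ Δ := budget hΩ hmax hadj
  -- now pure arithmetic
  set lg := (lgS C u b' φ).ncard
  have hlin : ℓ ≤ t' + a + s + r + lg := by omega
  have hmul := Nat.mul_le_mul_left b' hlin
  rw [Nat.left_distrib] at hmul
  omega

lemma DD_empty {Δ b' t' a lam : ℕ} (hb'pos : 1 ≤ b') (hmax : maxDeg H ≤ Δ)
    (hadj : ∀ v : V, v ≠ u → H.Adj u v) (hlam : Δ / b' < lam) :
    DD C u b' t' a lam = ∅ := by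
  rw [Set.eq_empty_iff_forall_notMem]
  intro φ hφ
  have h5 : b' * (lgS C u b' φ).ncard ≤ Δ := budget hφ.1 hmax hadj
  have h6 : lam ≤ (lgS C u b' φ).ncard := hφ.2.2
  have h7 : (lgS C u b' φ).ncard ≤ Δ / b' := Nat.le_div_iff_mul_le (by omega) |>.2 (by
    rw [Nat.mul_comm]; exact h5)
  omega

lemma rec_step (Δ ℓ : ℕ) (bb : ℝ) (b' t' k a lam s r m₀ : ℕ)
    (hb' : b' = ⌊bb⌋₊ + 1) (hm₀ : m₀ = ⌊(Δ : ℝ) ^ ((1 : ℝ)/3)⌋₊)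
    (hL : (C.L u).card = ℓ) (hmax : maxDeg H ≤ Δ) (hadj : ∀ v : V, v ≠ u → H.Adj u v)
    (hrich : C.ISRich bb Δ) (hΔpos : 0 < Δ) (hm₀pos : 1 ≤ m₀)
    (hak : a < k)
    (hnum1 : b' * (t' + k + s + r) + Δ < b' * ℓ)
    (hnumA : 3 * ((t' + k) * m₀) ≤ s)
    (hnumB : 3 * Δ ≤ r * b') :
    3 * (DD C u b' t' a lam).ncard
      ≤ (DD C u b' t' (a + 1) lam).ncard + (DD C u b' t' a (lam + 1)).ncard := by
  set A' : Set (V → Option ℕ) :=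
    {φ | φ ∈ DD C u b' t' a lam ∧ s ≤ {c | tsb C u Δ bb c φ}.ncard} with hA'
  set A : Set (V → Option ℕ) :=
    {φ | φ ∈ DD C u b' t' a lam ∧ r ≤ {c | rsb C u Δ bb c φ}.ncard} with hAdef
  have hsplit : (DD C u b' t' a lam).ncard ≤ A'.ncard + A.ncard := by
    have hsub := case_split (C := C) (u := u) Δ ℓ bb b' t' a lam s r hb' hL hmax hadj
      (by have : b' * (t' + a + s + r) ≤ b' * (t' + k + s + r) :=
            Nat.mul_le_mul_left b' (by omega)
          omega)
    refine (Set.ncard_le_ncard hsub ?_).trans (Set.ncard_union_le _ _)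
    exact (DD_finite.subset fun _ h => h.1).union (DD_finite.subset fun _ h => h.1)
  have hA'bound : 3 * A'.ncard ≤ (DD C u b' t' (a + 1) lam).ncard := by
    have hcA := countA (C := C) (u := u) Δ bb b' t' a lam s hb'
    have hX : 0 < (t' + a + 1) * m₀ := by positivity
    have key : ((t' + a + 1) * m₀) * (3 * A'.ncard)
        ≤ ((t' + a + 1) * m₀) * (DD C u b' t' (a + 1) lam).ncard := by
      have h1 : (3 * ((t' + a + 1) * m₀)) * A'.ncard ≤ s * A'.ncard := by
        refine Nat.mul_le_mul_right _ ?_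
        refine le_trans ?_ hnumA
        refine Nat.mul_le_mul_left 3 ?_
        exact Nat.mul_le_mul_right m₀ (by omega)
      calc ((t' + a + 1) * m₀) * (3 * A'.ncard)
          = (3 * ((t' + a + 1) * m₀)) * A'.ncard := by ring
        _ ≤ s * A'.ncard := h1
        _ ≤ ((t' + a + 1) * m₀) * (DD C u b' t' (a + 1) lam).ncard := by
            rw [hm₀] at *
            exact hcA
    exact Nat.le_of_mul_le_mul_left key hX
  have hAbound : 3 * A.ncard ≤ (DD C u b' t' a (lam + 1)).ncard := by
    have hcB := countB (C := C) (u := u) Δ bb hrich b' t' a lam r hb' hmax hadj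
    have key : Δ * (3 * A.ncard) ≤ Δ * (DD C u b' t' a (lam + 1)).ncard := by
      calc Δ * (3 * A.ncard) = (3 * Δ) * A.ncard := by ring
        _ ≤ (r * b') * A.ncard := Nat.mul_le_mul_right _ hnumB
        _ = r * b' * A.ncard := by ring
        _ ≤ Δ * (DD C u b' t' a (lam + 1)).ncard := hcB
    exact Nat.le_of_mul_le_mul_left key hΔpos
  omega

lemma descent (Δ ℓ : ℕ) (bb : ℝ) (b' t' k s r m₀ : ℕ)
    (hb' : b' = ⌊bb⌋₊ + 1) (hm₀ : m₀ = ⌊(Δ : ℝ) ^ ((1 : ℝ)/3)⌋₊)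
    (hL : (C.L u).card = ℓ) (hmax : maxDeg H ≤ Δ) (hadj : ∀ v : V, v ≠ u → H.Adj u v)
    (hrich : C.ISRich bb Δ) (hΔpos : 0 < Δ) (hm₀pos : 1 ≤ m₀)
    (hnum1 : b' * (t' + k + s + r) + Δ < b' * ℓ)
    (hnumA : 3 * ((t' + k) * m₀) ≤ s)
    (hnumB : 3 * Δ ≤ r * b') :
    ∀ N a lam, (k - a) + (Δ / b' + 1 - lam) ≤ N →
      ((DD C u b' t' a lam).ncard : ℝ)
        ≤ (2/3 : ℝ) ^ (k - a) * ((Omega C u).ncard : ℝ) := by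
  intro N
  induction N with
  | zero =>
    intro a lam h
    have hka : k - a = 0 := by omega
    rw [hka, pow_zero, one_mul]
    exact_mod_cast Set.ncard_le_ncard
      (show DD C u b' t' a lam ⊆ Omega C u from fun φ h => h.1) Omega_finite
  | succ N ih =>
    intro a lam h
    by_cases hak : k ≤ a
    · have hka : k - a = 0 := by omega
      rw [hka, pow_zero, one_mul]
      exact_mod_cast Set.ncard_le_ncard
        (show DD C u b' t' a lam ⊆ Omega C u from fun φ h => h.1) Omega_finite
    · push_neg at hak
      by_cases hlam : Δ / b' < lam
      · rw [DD_empty (by omega) hmax hadj hlam]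
        simp only [Set.ncard_empty, Nat.cast_zero]
        positivity
      · push_neg at hlam
        have h3 := rec_step (C := C) (u := u) Δ ℓ bb b' t' k a lam s r m₀ hb' hm₀ hL hmax
          hadj hrich hΔpos hm₀pos hak hnum1 hnumA hnumB
        have ih1 := ih (a + 1) lam (by omega)
        have ih2 := ih a (lam + 1) (by omega)
        have hka : k - a = (k - (a + 1)) + 1 := by omega
        have cast3 : 3 * ((DD C u b' t' a lam).ncard : ℝ)
            ≤ ((DD C u b' t' (a + 1) lam).ncard : ℝ)
              + ((DD C u b' t' a (lam + 1)).ncard : ℝ) := by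
          exact_mod_cast h3
        rw [hka] at ih2 ⊢
        rw [pow_succ] at ih2 ⊢
        have hX : (0 : ℝ) ≤ (2/3 : ℝ) ^ (k - (a + 1)) * ((Omega C u).ncard : ℝ) := by
          positivity
        linarith
  
/-! ### the master lemma -/

set_option maxHeartbeats 1000000 in
lemma master (Δ ℓ : ℕ) (bb : ℝ) (hbb : 0 < bb) (hbΔ : bb ≤ (Δ : ℝ) ^ ((1 : ℝ)/48))
    (hΔ : 10 ^ 23 ≤ Δ) (hmax : maxDeg H ≤ Δ) (hℓ : 5 * (Δ : ℝ) / bb ≤ (ℓ : ℝ))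
    (hrich : C.ISRich bb Δ) (hadj : ∀ v : V, v ≠ u → H.Adj u v) (hL : (C.L u).card = ℓ) :
    8 * Δ ^ 3 * {φ : V → Option ℕ | IsPartialColoring C φ ∧ φ u = none ∧
        ((availCount C φ u : ℝ) < (Δ : ℝ) ^ ((7 : ℝ)/12))}.ncard
      < {φ : V → Option ℕ | IsPartialColoring C φ ∧ φ u = none}.ncard := by
  -- parameters
  set b' : ℕ := ⌊bb⌋₊ + 1 with hb'
  set t' : ℕ := ⌈(Δ : ℝ) ^ ((7 : ℝ)/12)⌉₊ with ht'
  set m₀ : ℕ := ⌊(Δ : ℝ) ^ ((1 : ℝ)/3)⌋₊ with hm₀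
  set s : ℕ := ⌊(ℓ : ℝ)/10⌋₊ + 1 with hs
  set r : ℕ := ⌊3 * (ℓ : ℝ)/5⌋₊ + 1 with hr
  -- basic real facts
  have hΔR : (10 : ℝ) ^ 23 ≤ (Δ : ℝ) := by exact_mod_cast hΔ
  have hΔ1R : (1 : ℝ) ≤ (Δ : ℝ) := by norm_num at hΔR ⊢; linarith
  have hΔposR : (0 : ℝ) < (Δ : ℝ) := by linarith
  have hΔpos : 0 < Δ := by exact_mod_cast hΔposR
  have hℓ0 : (0 : ℝ) ≤ (ℓ : ℝ) := Nat.cast_nonneg _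
  -- rpow facts
  have h712ge1 : (1 : ℝ) ≤ (Δ : ℝ) ^ ((7 : ℝ)/12) := by
    calc (1 : ℝ) = (Δ : ℝ) ^ (0 : ℝ) := (Real.rpow_zero _).symm
      _ ≤ (Δ : ℝ) ^ ((7 : ℝ)/12) := Real.rpow_le_rpow_of_exponent_le hΔ1R (by norm_num)
  have h13ge1 : (1 : ℝ) ≤ (Δ : ℝ) ^ ((1 : ℝ)/3) := by
    calc (1 : ℝ) = (Δ : ℝ) ^ (0 : ℝ) := (Real.rpow_zero _).symm
      _ ≤ (Δ : ℝ) ^ ((1 : ℝ)/3) := Real.rpow_le_rpow_of_exponent_le hΔ1R (by norm_num)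
  have hA1 : (Δ : ℝ) ^ ((11 : ℝ)/12) = (Δ : ℝ) ^ ((7 : ℝ)/12) * (Δ : ℝ) ^ ((1 : ℝ)/3) := by
    rw [← Real.rpow_add hΔposR]; norm_num
  have hA2 : (Δ : ℝ) ^ ((47 : ℝ)/48) = (Δ : ℝ) ^ ((11 : ℝ)/12) * (Δ : ℝ) ^ ((1 : ℝ)/16) := by
    rw [← Real.rpow_add hΔposR]; norm_num
  have h16ge24 : (24 : ℝ) ≤ (Δ : ℝ) ^ ((1 : ℝ)/16) := by
    have h1 : ((24 : ℝ) ^ (16 : ℕ)) ≤ (Δ : ℝ) := by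
      calc ((24 : ℝ) ^ (16 : ℕ)) ≤ 10 ^ 23 := by norm_num
        _ ≤ (Δ : ℝ) := hΔR
    have h2 : (((24 : ℝ) ^ (16 : ℕ)) : ℝ) ^ ((1 : ℝ)/16) ≤ (Δ : ℝ) ^ ((1 : ℝ)/16) :=
      Real.rpow_le_rpow (by positivity) h1 (by norm_num)
    calc (24 : ℝ) = (((24 : ℝ) ^ (16 : ℕ)) : ℝ) ^ ((1 : ℝ)/16) := by
          rw [← Real.rpow_natCast (24 : ℝ) 16, ← Real.rpow_mul (by norm_num)]
          norm_num
      _ ≤ (Δ : ℝ) ^ ((1 : ℝ)/16) := h2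
  have h1112ge : (Δ : ℝ) ^ ((7 : ℝ)/12) ≤ (Δ : ℝ) ^ ((11 : ℝ)/12) :=
    Real.rpow_le_rpow_of_exponent_le hΔ1R (by norm_num)
  have h1112pos : (0 : ℝ) < (Δ : ℝ) ^ ((11 : ℝ)/12) := by positivity
  -- the key lower bound on ℓ
  have hℓ5 : 5 * (Δ : ℝ) ^ ((47 : ℝ)/48) ≤ (ℓ : ℝ) := by
    have hstep : 5 * (Δ : ℝ) / (Δ : ℝ) ^ ((1 : ℝ)/48) ≤ 5 * (Δ : ℝ) / bb :=
      div_le_div_of_nonneg_left (by positivity) hbb hbΔ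
    have heq : 5 * (Δ : ℝ) / (Δ : ℝ) ^ ((1 : ℝ)/48) = 5 * (Δ : ℝ) ^ ((47 : ℝ)/48) := by
      rw [mul_div_assoc]
      congr 1
      rw [show ((47 : ℝ)/48) = (1 : ℝ) - (1 : ℝ)/48 by norm_num, Real.rpow_sub hΔposR,
        Real.rpow_one]
    linarith
  have hl120 : 120 * (Δ : ℝ) ^ ((11 : ℝ)/12) ≤ (ℓ : ℝ) := by
    have hx := mul_le_mul_of_nonneg_left h16ge24 h1112pos.le
    have : 120 * (Δ : ℝ) ^ ((11 : ℝ)/12) ≤ 5 * (Δ : ℝ) ^ ((47 : ℝ)/48) := by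
      rw [hA2]
      linarith
    linarith
  have hℓbb : 5 * (Δ : ℝ) ≤ (ℓ : ℝ) * bb := by
    rw [div_le_iff₀ hbb] at hℓ
    linarith
  have hbb' : bb ≤ (b' : ℝ) := by
    have := Nat.lt_floor_add_one bb
    push_cast [hb']
    linarith
  have hb'pos : (0 : ℝ) < (b' : ℝ) := lt_of_lt_of_le hbb hbb'
  -- bounds for the parameters
  have ht'lb : (Δ : ℝ) ^ ((7 : ℝ)/12) ≤ (t' : ℝ) := Nat.le_ceil _
  have ht'ub : (t' : ℝ) ≤ (Δ : ℝ) ^ ((7 : ℝ)/12) + 1 := (Nat.ceil_lt_add_one (by positivity)).le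
  have hm₀ub : (m₀ : ℝ) ≤ (Δ : ℝ) ^ ((1 : ℝ)/3) := Nat.floor_le (by positivity)
  have hm₀pos : 1 ≤ m₀ := Nat.le_floor (by exact_mod_cast h13ge1)
  have hsub : (s : ℝ) ≤ (ℓ : ℝ)/10 + 1 := by
    push_cast [hs]
    have := Nat.floor_le (show (0:ℝ) ≤ (ℓ : ℝ)/10 by positivity)
    linarith
  have hslb : (ℓ : ℝ)/10 < (s : ℝ) := by
    push_cast [hs]
    have := Nat.lt_floor_add_one ((ℓ : ℝ)/10)
    linarith
  have hrub : (r : ℝ) ≤ 3 * (ℓ : ℝ)/5 + 1 := by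
    push_cast [hr]
    have := Nat.floor_le (show (0:ℝ) ≤ 3 * (ℓ : ℝ)/5 by positivity)
    linarith
  have hrlb : 3 * (ℓ : ℝ)/5 < (r : ℝ) := by
    push_cast [hr]
    have := Nat.lt_floor_add_one (3 * (ℓ : ℝ)/5)
    linarith
  -- numeric condition A
  have hnumA : 3 * ((t' + t') * m₀) ≤ s := by
    have hc1 : (t' : ℝ) * m₀ ≤ ((Δ : ℝ) ^ ((7 : ℝ)/12) + 1) * (Δ : ℝ) ^ ((1 : ℝ)/3) :=
      mul_le_mul ht'ub hm₀ub (Nat.cast_nonneg _) (by positivity)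
    have hc2 : ((Δ : ℝ) ^ ((7 : ℝ)/12) + 1) * (Δ : ℝ) ^ ((1 : ℝ)/3)
        ≤ 2 * (Δ : ℝ) ^ ((11 : ℝ)/12) := by
      rw [hA1]
      have h13nn : (0 : ℝ) ≤ (Δ : ℝ) ^ ((1 : ℝ)/3) := by positivity
      have hy := mul_le_mul_of_nonneg_right
        (show (Δ : ℝ) ^ ((7 : ℝ)/12) + 1 ≤ 2 * (Δ : ℝ) ^ ((7 : ℝ)/12) by linarith) h13nn
      linarith
    have hc3 : 12 * (Δ : ℝ) ^ ((11 : ℝ)/12) ≤ (ℓ : ℝ)/10 := by linarith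
    have hR : ((3 * ((t' + t') * m₀) : ℕ) : ℝ) < (s : ℝ) := by
      have e1 : ((3 * ((t' + t') * m₀) : ℕ) : ℝ) = 3 * (((t' : ℝ) + (t' : ℝ)) * (m₀ : ℝ)) := by
        push_cast; ring
      rw [e1]
      linarith
    have : (3 * ((t' + t') * m₀) : ℕ) < s := by exact_mod_cast hR
    omega
  -- numeric condition B
  have hnumB : 3 * Δ ≤ r * b' := by
    have h1 : (3 * (ℓ : ℝ)/5) * bb ≤ (r : ℝ) * (b' : ℝ) :=
      mul_le_mul hrlb.le hbb' hbb.le (Nat.cast_nonneg _)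
    have hR : ((3 * Δ : ℕ) : ℝ) ≤ ((r * b' : ℕ) : ℝ) := by
      have e1 : ((3 * Δ : ℕ) : ℝ) = 3 * (Δ : ℝ) := by push_cast; ring
      have e2 : ((r * b' : ℕ) : ℝ) = (r : ℝ) * (b' : ℝ) := by push_cast; ring
      rw [e1, e2]
      linarith
    exact_mod_cast hR
  -- numeric condition 1
  have hnum1 : b' * (t' + t' + s + r) + Δ < b' * ℓ := by
    have hΔle : (Δ : ℝ) ≤ (b' : ℝ) * ℓ / 5 := by
      have h2 : (ℓ : ℝ) * bb ≤ (ℓ : ℝ) * b' := mul_le_mul_of_nonneg_left hbb' hℓ0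
      linarith
    have hcore : (t' : ℝ) + t' + s + r + (ℓ : ℝ)/5 < (ℓ : ℝ) := by
      have key : 20 * (Δ : ℝ) ^ ((7 : ℝ)/12) + 40 < (ℓ : ℝ) := by
        have k1 : 120 * (Δ : ℝ) ^ ((7 : ℝ)/12) ≤ (ℓ : ℝ) := by linarith
        linarith
      linarith [ht'ub, hsub, hrub]
    have hR : (b' : ℝ) * ((t' : ℝ) + t' + s + r) + Δ < (b' : ℝ) * ℓ := by
      have h3 : (b' : ℝ) * ((t' : ℝ) + t' + s + r) + (b' : ℝ) * ℓ / 5 < (b' : ℝ) * ℓ := by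
        have := mul_lt_mul_of_pos_left hcore hb'pos
        ring_nf at this ⊢
        linarith
      linarith
    have hRc : ((b' * (t' + t' + s + r) + Δ : ℕ) : ℝ) < ((b' * ℓ : ℕ) : ℝ) := by
      have e1 : ((b' * (t' + t' + s + r) + Δ : ℕ) : ℝ)
          = (b' : ℝ) * ((t' : ℝ) + (t' : ℝ) + (s : ℝ) + (r : ℝ)) + (Δ : ℝ) := by
        push_cast; ring
      have e2 : ((b' * ℓ : ℕ) : ℝ) = (b' : ℝ) * (ℓ : ℝ) := by push_cast; ring
      rw [e1, e2]
      linarith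
    exact_mod_cast hRc
  -- final numeric condition
  have hfin : 8 * (Δ : ℝ) ^ 3 * (2/3 : ℝ) ^ t' < 1 := by
    set m : ℕ := t' / 7 with hm
    have h7m : 7 * m ≤ t' := by omega
    have hmge : (t' : ℝ) - 6 ≤ 7 * (m : ℝ) := by
      have hnat : t' ≤ 7 * m + 6 := by omega
      have : (t' : ℝ) ≤ 7 * (m : ℝ) + 6 := by exact_mod_cast hnat
      linarith
    have hBern : 1 + (m : ℝ) * (1/2) ≤ (3/2 : ℝ) ^ m := by
      have h := one_add_mul_le_pow (a := (1/2 : ℝ)) (by norm_num) m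
      norm_num at h ⊢
      linarith
    have hdiv14 : (t' : ℝ)/14 ≤ (3/2 : ℝ) ^ m := by linarith
    have hkey : ((t' : ℝ)/14) ^ (7 : ℕ) ≤ (3/2 : ℝ) ^ t' := by
      calc ((t' : ℝ)/14) ^ (7 : ℕ) ≤ ((3/2 : ℝ) ^ m) ^ (7 : ℕ) :=
            pow_le_pow_left₀ (by positivity) hdiv14 7
        _ = (3/2 : ℝ) ^ (7 * m) := by rw [← pow_mul, Nat.mul_comm]
        _ ≤ (3/2 : ℝ) ^ t' := pow_le_pow_right₀ (by norm_num) h7m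
    have hΔ4 : (Δ : ℝ) ^ (4 : ℕ) ≤ ((Δ : ℝ) ^ ((7 : ℝ)/12)) ^ (7 : ℕ) := by
      have he : ((Δ : ℝ) ^ ((7 : ℝ)/12)) ^ (7 : ℕ) = (Δ : ℝ) ^ ((49 : ℝ)/12) := by
        rw [← Real.rpow_natCast ((Δ : ℝ) ^ ((7 : ℝ)/12)) 7, ← Real.rpow_mul hΔposR.le]
        norm_num
      rw [he]
      calc (Δ : ℝ) ^ (4 : ℕ) = (Δ : ℝ) ^ ((4 : ℝ)) := (Real.rpow_natCast _ 4).symm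
        _ ≤ (Δ : ℝ) ^ ((49 : ℝ)/12) := Real.rpow_le_rpow_of_exponent_le hΔ1R (by norm_num)
    have hmain : 8 * (Δ : ℝ) ^ 3 * (14 : ℝ) ^ (7 : ℕ) < (Δ : ℝ) ^ (4 : ℕ) := by
      have hc : (8 : ℝ) * 14 ^ (7 : ℕ) < 10 ^ 23 := by norm_num
      have hΔ3pos : (0 : ℝ) < (Δ : ℝ) ^ 3 := by positivity
      have heq4 : (Δ : ℝ) ^ (4 : ℕ) = (Δ : ℝ) ^ 3 * Δ := by ring
      rw [heq4]
      have h5 := mul_le_mul_of_nonneg_left hΔR hΔ3pos.le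
      have h6 := mul_lt_mul_of_pos_left hc hΔ3pos
      ring_nf at h5 h6 ⊢
      linarith
    have hfin1 : 8 * (Δ : ℝ) ^ 3 < (3/2 : ℝ) ^ t' := by
      have h2 : ((Δ : ℝ) ^ ((7 : ℝ)/12)/14) ^ (7 : ℕ) ≤ ((t' : ℝ)/14) ^ (7 : ℕ) := by
        refine pow_le_pow_left₀ (by positivity) ?_ 7
        linarith
      have h3 : ((Δ : ℝ) ^ ((7 : ℝ)/12)/14) ^ (7 : ℕ)
          = ((Δ : ℝ) ^ ((7 : ℝ)/12)) ^ (7 : ℕ) / (14 : ℝ) ^ (7 : ℕ) := div_pow _ _ _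
      have h14pos : (0 : ℝ) < (14 : ℝ) ^ (7 : ℕ) := by positivity
      have h4 : 8 * (Δ : ℝ) ^ 3 < ((Δ : ℝ) ^ ((7 : ℝ)/12)) ^ (7 : ℕ) / (14 : ℝ) ^ (7 : ℕ) := by
        rw [lt_div_iff₀ h14pos]
        calc 8 * (Δ : ℝ) ^ 3 * 14 ^ (7 : ℕ) < (Δ : ℝ) ^ (4 : ℕ) := hmain
          _ ≤ ((Δ : ℝ) ^ ((7 : ℝ)/12)) ^ (7 : ℕ) := hΔ4
      calc 8 * (Δ : ℝ) ^ 3 < ((Δ : ℝ) ^ ((7 : ℝ)/12)) ^ (7 : ℕ) / (14 : ℝ) ^ (7 : ℕ) := h4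
        _ = ((Δ : ℝ) ^ ((7 : ℝ)/12)/14) ^ (7 : ℕ) := h3.symm
        _ ≤ ((t' : ℝ)/14) ^ (7 : ℕ) := h2
        _ ≤ (3/2 : ℝ) ^ t' := hkey
    have hpos32 : (0 : ℝ) < (3/2 : ℝ) ^ t' := by positivity
    have h23 : (2/3 : ℝ) ^ t' = ((3/2 : ℝ) ^ t')⁻¹ := by
      rw [← inv_pow]
      norm_num
    rw [h23, ← div_eq_mul_inv, div_lt_one hpos32]
    exact hfin1
  -- the descent
  have hdesc := descent (C := C) (u := u) Δ ℓ bb b' t' t' s r m₀ rfl rfl hL hmax hadj hrich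
    hΔpos hm₀pos hnum1 hnumA hnumB (t' + (Δ / b' + 1)) 0 0 (by simp)
  rw [Nat.sub_zero] at hdesc
  -- bad set inside the level set
  have hbadsub : {φ : V → Option ℕ | IsPartialColoring C φ ∧ φ u = none ∧
      ((availCount C φ u : ℝ) < (Δ : ℝ) ^ ((7 : ℝ)/12))} ⊆ DD C u b' t' 0 0 := by
    rintro φ ⟨h1, h2, h3⟩
    have hav : availCount C φ u = (availS C u φ).ncard := rfl
    have h4 : (availS C u φ).ncard < t' := by
      have : ((availS C u φ).ncard : ℝ) < (t' : ℝ) := by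
        rw [← hav]
        exact lt_of_lt_of_le h3 ht'lb
      exact_mod_cast this
    exact ⟨⟨h1, h2⟩, by omega, Nat.zero_le _⟩
  have hbadfin : ({φ : V → Option ℕ | IsPartialColoring C φ ∧ φ u = none ∧
      ((availCount C φ u : ℝ) < (Δ : ℝ) ^ ((7 : ℝ)/12))}).Finite :=
    Omega_finite.subset fun φ h => ⟨h.1, h.2.1⟩
  have hbadle : ({φ : V → Option ℕ | IsPartialColoring C φ ∧ φ u = none ∧
      ((availCount C φ u : ℝ) < (Δ : ℝ) ^ ((7 : ℝ)/12))}).ncard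
      ≤ (DD C u b' t' 0 0).ncard :=
    Set.ncard_le_ncard hbadsub DD_finite
  have hΩpos : 0 < (Omega C u).ncard := (Set.ncard_pos Omega_finite).2 Omega_nonempty
  -- put it together over the reals
  have hfinal : ((8 * Δ ^ 3 * {φ : V → Option ℕ | IsPartialColoring C φ ∧ φ u = none ∧
      ((availCount C φ u : ℝ) < (Δ : ℝ) ^ ((7 : ℝ)/12))}.ncard : ℕ) : ℝ)
      < (((Omega C u).ncard : ℕ) : ℝ) := by
    push_cast
    have c1 : (({φ : V → Option ℕ | IsPartialColoring C φ ∧ φ u = none ∧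
        ((availCount C φ u : ℝ) < (Δ : ℝ) ^ ((7 : ℝ)/12))}.ncard : ℕ) : ℝ)
        ≤ ((DD C u b' t' 0 0).ncard : ℝ) := by exact_mod_cast hbadle
    have c2 : ((DD C u b' t' 0 0).ncard : ℝ)
        ≤ (2/3 : ℝ) ^ t' * ((Omega C u).ncard : ℝ) := hdesc
    have hΩR : (1 : ℝ) ≤ ((Omega C u).ncard : ℝ) := by exact_mod_cast hΩpos
    have hΔ3 : (0:ℝ) ≤ 8 * (Δ : ℝ) ^ 3 := by positivity
    have step : 8 * (Δ : ℝ) ^ 3 * (({φ : V → Option ℕ | IsPartialColoring C φ ∧ φ u = none ∧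
        ((availCount C φ u : ℝ) < (Δ : ℝ) ^ ((7 : ℝ)/12))}.ncard : ℕ) : ℝ)
        ≤ (8 * (Δ : ℝ) ^ 3 * (2/3 : ℝ) ^ t') * ((Omega C u).ncard : ℝ) := by
      calc 8 * (Δ : ℝ) ^ 3 * _ ≤ 8 * (Δ : ℝ) ^ 3 * ((2/3 : ℝ) ^ t' * ((Omega C u).ncard : ℝ)) :=
            mul_le_mul_of_nonneg_left (c1.trans c2) hΔ3
        _ = (8 * (Δ : ℝ) ^ 3 * (2/3 : ℝ) ^ t') * ((Omega C u).ncard : ℝ) := by ring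
    have hlt : (8 * (Δ : ℝ) ^ 3 * (2/3 : ℝ) ^ t') * ((Omega C u).ncard : ℝ)
        < 1 * ((Omega C u).ncard : ℝ) := by
      refine mul_lt_mul_of_pos_right hfin ?_
      linarith
    calc 8 * (Δ : ℝ) ^ 3 * _ ≤ _ := step
      _ < 1 * ((Omega C u).ncard : ℝ) := hlt
      _ = ((Omega C u).ncard : ℝ) := one_mul _
  have : ({φ : V → Option ℕ | IsPartialColoring C φ ∧ φ u = none} : Set (V → Option ℕ))
      = Omega C u := rfl
  rw [this]
  exact_mod_cast hfinal

end FewAux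
/-- (Probabilities of the uniform distribution on a finite set are
expressed as ratios of counts: `Pr[A] < 1/(8Δ³)` becomes `8Δ³·|A| < |Ω|`.)
For `b(Δ) > 0` with `b(Δ) ≤ Δ^{o(1)}` and all sufficiently large `Δ`: if `H` has maximum
degree at most `Δ`, `ℓ ≥ 5Δ/b(Δ)` is even, `(L,M)` is a `b(Δ)`-IS-rich (w.r.t. `Δ`)
correspondence assignment for `H`, `u` is adjacent to all other vertices and `|L(u)| = ℓ`,
then for a uniformly random partial `(L,M)`-coloring `φ` with `u ∉ dom(φ)`, the
probability that fewer than `Δ^{7/12}` colors are available at `u` is less than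
`1/(8Δ³)`. -/
theorem few_available_colors_unlikely
    (b : ℕ → ℝ) (hb : ∀ Δ, 0 < b Δ)
    (hbo : ∀ ε : ℝ, 0 < ε → ∃ Δε : ℕ, ∀ Δ : ℕ, Δε ≤ Δ → b Δ ≤ (Δ : ℝ) ^ ε) :
    ∃ Δ₀ : ℕ, ∀ Δ : ℕ, Δ₀ ≤ Δ →
      ∀ (V : Type) [Fintype V] (H : SimpleGraph V) (ℓ : ℕ),
        RandomCorr.maxDeg H ≤ Δ → Even ℓ → 5 * (Δ : ℝ) / b Δ ≤ (ℓ : ℝ) →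
        ∀ C : RandomCorr.CorrAssignment H, C.ISRich (b Δ) Δ →
        ∀ u : V, (∀ v : V, v ≠ u → H.Adj u v) → (C.L u).card = ℓ →
          8 * Δ ^ 3 *
            Set.ncard {φ : V → Option ℕ | RandomCorr.IsPartialColoring C φ ∧
              φ u = none ∧
              (RandomCorr.availCount C φ u : ℝ) < (Δ : ℝ) ^ ((7 : ℝ)/12)} <
          Set.ncard {φ : V → Option ℕ | RandomCorr.IsPartialColoring C φ ∧
            φ u = none} := by
  obtain ⟨Δ₁, h₁⟩ := hbo ((1 : ℝ)/48) (by norm_num)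
  refine ⟨max Δ₁ (10 ^ 23), fun Δ hΔ V _ H ℓ hmax _hEven hℓ C hrich u hadj hLu => ?_⟩
  exact FewAux.master (C := C) (u := u) Δ ℓ (b Δ) (hb Δ)
    (h₁ Δ (le_trans (le_max_left _ _) hΔ)) (le_trans (le_max_right _ _) hΔ)
    hmax hℓ hrich hadj hLu
end
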